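/- arXiv:1204.4967 — 5 statements merged into one kernel-verified Lean document; each statement's English description precedes it below -/
import Mathlib

section
/- Let K be a field, d ≥ 2 an integer, and F, G ∈ K[X,Y] binary forms of degree d. For every λ ∈ K^× and every A ∈ GL₂(K), one has Res_d(λF_A, λG_A) = λ^{2d} · det(A)^{d²+d} · Res_d(F,G). -/
noncomputable section

/-- Determinant of the Sylvester matrix of two polynomials, given by coefficient
sequences `p` (regarded as having degree `m`) and `q` (regarded as having degree `n`). -/
def sylRes {K : Type*} [CommRing K] (m n : ℕ) (p q : ℕ → K) : K :=
  Matrix.det (Matrix.of fun i j : Fin (n + m) =>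
    if (i : ℕ) < n then
      (if (i : ℕ) ≤ (j : ℕ) ∧ (j : ℕ) ≤ (i : ℕ) + m then p (m - ((j : ℕ) - (i : ℕ))) else 0)
    else
      (if (i : ℕ) - n ≤ (j : ℕ) ∧ (j : ℕ) ≤ ((i : ℕ) - n) + n then
        q (n - ((j : ℕ) - ((i : ℕ) - n))) else 0))

/-- The binary form of degree `d` with coefficient sequence `f`
(`f i` is the coefficient of `X^i Y^(d-i)`). -/
def toForm {K : Type*} [CommRing K] (d : ℕ) (f : ℕ → K) : MvPolynomial (Fin 2) K :=
  ∑ i ∈ Finset.range (d + 1),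
    MvPolynomial.C (f i) * MvPolynomial.X 0 ^ i * MvPolynomial.X 1 ^ (d - i)

/-- Substitution `X ↦ A₀₀ X + A₀₁ Y`, `Y ↦ A₁₀ X + A₁₁ Y`. -/
def substMat {K : Type*} [CommRing K] (A : Matrix (Fin 2) (Fin 2) K)
    (P : MvPolynomial (Fin 2) K) : MvPolynomial (Fin 2) K :=
  MvPolynomial.eval₂ MvPolynomial.C
    (fun k => MvPolynomial.C (A k 0) * MvPolynomial.X 0 + MvPolynomial.C (A k 1) * MvPolynomial.X 1) P

/-- Coefficient sequence of a binary form of degree `d`. -/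
def coeffVec {K : Type*} [CommRing K] (d : ℕ) (P : MvPolynomial (Fin 2) K) : ℕ → K :=
  fun i => MvPolynomial.coeff (Finsupp.single (0 : Fin 2) i + Finsupp.single (1 : Fin 2) (d - i)) P

/-- Coefficients of `F_A = δ·(F∘A) − β·(G∘A)` for `A = [[α,β],[γ,δ]]`. -/
def FA {K : Type*} [CommRing K] (d : ℕ) (f g : ℕ → K) (A : Matrix (Fin 2) (Fin 2) K) : ℕ → K :=
  coeffVec d (MvPolynomial.C (A 1 1) * substMat A (toForm d f) -
    MvPolynomial.C (A 0 1) * substMat A (toForm d g))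

/-- Coefficients of `G_A = −γ·(F∘A) + α·(G∘A)` for `A = [[α,β],[γ,δ]]`. -/
def GA {K : Type*} [CommRing K] (d : ℕ) (f g : ℕ → K) (A : Matrix (Fin 2) (Fin 2) K) : ℕ → K :=
  coeffVec d (-(MvPolynomial.C (A 1 0)) * substMat A (toForm d f) +
    MvPolynomial.C (A 0 0) * substMat A (toForm d g))

/-- The ideal `Res_R([φ])`: generated by the resultants of all models over `R`
of the form `[F,G]^{(λ,A)}` with `(λ,A) ∈ K^× × GL₂(K)`. -/
def ResIdeal (R : Type*) {K : Type*} [CommRing R] [Field K] [Algebra R K]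
    (d : ℕ) (f g : ℕ → K) : Ideal R :=
  Ideal.span { r : R | ∃ (l : K) (A : Matrix (Fin 2) (Fin 2) K), l ≠ 0 ∧ A.det ≠ 0 ∧
    (∀ i, ∃ a : R, algebraMap R K a = l * FA d f g A i) ∧
    (∀ i, ∃ b : R, algebraMap R K b = l * GA d f g A i) ∧
    algebraMap R K r = sylRes d d (fun i => l * FA d f g A i) (fun i => l * GA d f g A i) }

/-- The ideal `Res_R([φ]₁)`: as `ResIdeal` but with `A` restricted to affine
(upper-triangular) transformations. -/
def AffResIdeal (R : Type*) {K : Type*} [CommRing R] [Field K] [Algebra R K]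
    (d : ℕ) (f g : ℕ → K) : Ideal R :=
  Ideal.span { r : R | ∃ (l : K) (A : Matrix (Fin 2) (Fin 2) K), l ≠ 0 ∧ A.det ≠ 0 ∧ A 1 0 = 0 ∧
    (∀ i, ∃ a : R, algebraMap R K a = l * FA d f g A i) ∧
    (∀ i, ∃ b : R, algebraMap R K b = l * GA d f g A i) ∧
    algebraMap R K r = sylRes d d (fun i => l * FA d f g A i) (fun i => l * GA d f g A i) }


namespace Res0Aux


open MvPolynomial Finset Matrix

variable {K : Type*} [CommRing K]

/-- exponent finsupp for total degree `N`, `Y`-exponent `j` -/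
def ee (N j : ℕ) : Fin 2 →₀ ℕ := Finsupp.single 0 (N - j) + Finsupp.single 1 j

/-- coefficient of `X^(N-j) Y^j` -/
def cf (N j : ℕ) (P : MvPolynomial (Fin 2) K) : K := MvPolynomial.coeff (ee N j) P

lemma ee_apply0 (N j : ℕ) : ee N j 0 = N - j := by simp [ee, Finsupp.single_apply]
lemma ee_apply1 (N j : ℕ) : ee N j 1 = j := by simp [ee, Finsupp.single_apply]

lemma fin2ext (μ : Fin 2 →₀ ℕ) : μ = Finsupp.single 0 (μ 0) + Finsupp.single 1 (μ 1) := by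
  ext i
  fin_cases i <;> simp [Finsupp.single_apply]

lemma ee_eq_iff {N j : ℕ} (hj : j ≤ N) (μ : Fin 2 →₀ ℕ) :
    ee N j = μ ↔ μ 0 = N - j ∧ μ 1 = j := by
  constructor
  · rintro rfl; exact ⟨ee_apply0 _ _, ee_apply1 _ _⟩
  · rintro ⟨h0, h1⟩
    rw [fin2ext μ, h0, h1]; rfl

lemma ee_eq_ee_iff {N j k : ℕ} (hj : j ≤ N) (hk : k ≤ N) :
    ee N j = ee N k ↔ j = k := by
  rw [ee_eq_iff hj, ee_apply0, ee_apply1]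
  constructor
  · rintro ⟨-, h⟩; omega
  · rintro rfl; exact ⟨rfl, rfl⟩

lemma degree_fin2 (μ : Fin 2 →₀ ℕ) : μ.degree = μ 0 + μ 1 := by
  rw [show μ.degree = ∑ i ∈ μ.support, μ i from rfl, show (∑ i ∈ μ.support, μ i) = ∑ i : Fin 2, μ i from
    Finset.sum_subset (Finset.subset_univ _) (by intro x _ h; simpa using h)]
  exact Fin.sum_univ_two μ

/-- Representation of a homogeneous binary polynomial by its coefficient vector. -/
lemma rep {n : ℕ} {P : MvPolynomial (Fin 2) K} (h : P.IsHomogeneous n) :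
    P = ∑ j ∈ range (n + 1), monomial (ee n j) (cf n j P) := by
  apply MvPolynomial.ext
  intro μ
  rw [coeff_sum]
  simp only [coeff_monomial]
  by_cases hμ : μ 0 + μ 1 = n
  · rw [Finset.sum_eq_single_of_mem (μ 1) (by simp; omega)]
    · rw [if_pos (by rw [ee_eq_iff (by omega)]; exact ⟨by omega, rfl⟩)]
      rw [cf]
      congr 1
      exact ((ee_eq_iff (N := n) (by omega) μ).2 ⟨by omega, rfl⟩).symm
    · intro b hb hne
      rw [if_neg]
      intro hc
      rw [ee_eq_iff (by simp at hb; omega)] at hc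
      exact hne hc.2.symm
  · have h0 : coeff μ P = 0 := by
      apply h.coeff_eq_zero
      rw [degree_fin2]
      exact hμ
    rw [h0, Finset.sum_eq_zero]
    intro b hb
    rw [if_neg]
    intro hc
    rw [ee_eq_iff (by simp at hb; omega)] at hc
    apply hμ
    have := hc.1; have := hc.2
    simp at hb
    omega

/-- The linear forms of the substitution. -/
def linP (A : Matrix (Fin 2) (Fin 2) K) (k : Fin 2) : MvPolynomial (Fin 2) K :=
  MvPolynomial.C (A k 0) * MvPolynomial.X 0 + MvPolynomial.C (A k 1) * MvPolynomial.X 1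

lemma substMat_eq_bind (A : Matrix (Fin 2) (Fin 2) K) (P : MvPolynomial (Fin 2) K) :
    substMat A P = MvPolynomial.bind₁ (linP A) P := by
  rw [substMat, MvPolynomial.bind₁, MvPolynomial.aeval_def, MvPolynomial.algebraMap_eq]
  rfl

lemma substMat_C (A : Matrix (Fin 2) (Fin 2) K) (c : K) : substMat A (C c) = C c := by
  simp [substMat_eq_bind]

lemma substMat_add (A : Matrix (Fin 2) (Fin 2) K) (P Q : MvPolynomial (Fin 2) K) :
    substMat A (P + Q) = substMat A P + substMat A Q := by simp [substMat_eq_bind]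

lemma substMat_mul (A : Matrix (Fin 2) (Fin 2) K) (P Q : MvPolynomial (Fin 2) K) :
    substMat A (P * Q) = substMat A P * substMat A Q := by simp [substMat_eq_bind]

lemma substMat_sum (A : Matrix (Fin 2) (Fin 2) K) {ι : Type*} (s : Finset ι)
    (F : ι → MvPolynomial (Fin 2) K) :
    substMat A (∑ i ∈ s, F i) = ∑ i ∈ s, substMat A (F i) := by simp [substMat_eq_bind]

lemma substMat_substMat (A B : Matrix (Fin 2) (Fin 2) K) (P : MvPolynomial (Fin 2) K) :
    substMat B (substMat A P) = substMat (A * B) P := by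
  simp only [substMat_eq_bind, MvPolynomial.bind₁_bind₁]
  have hfun : (fun i => (MvPolynomial.bind₁ (linP B)) (linP A i)) = linP (A * B) := by
    funext k
    simp only [linP, _root_.map_add, _root_.map_mul, MvPolynomial.bind₁_X_right,
      MvPolynomial.bind₁_C_right, Matrix.mul_apply, Fin.sum_univ_two]
    ring
  rw [hfun]

lemma monomial_ee (n j : ℕ) (c : K) :
    monomial (ee n j) c = C c * X 0 ^ (n - j) * X 1 ^ j := by
  rw [ee, show (monomial (Finsupp.single (0:Fin 2) (n-j) + Finsupp.single 1 j)) c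
      = monomial (Finsupp.single (0:Fin 2) (n-j)) c * monomial (Finsupp.single (1:Fin 2) j) 1 by
    rw [MvPolynomial.monomial_mul, mul_one],
    MvPolynomial.C_mul_X_pow_eq_monomial, MvPolynomial.X_pow_eq_monomial]

lemma isHomog_linP (A : Matrix (Fin 2) (Fin 2) K) (k : Fin 2) :
    (linP A k).IsHomogeneous 1 := by
  apply MvPolynomial.IsHomogeneous.add
  · simpa using (MvPolynomial.isHomogeneous_C (Fin 2) (A k 0)).mul (MvPolynomial.isHomogeneous_X K 0)
  · simpa using (MvPolynomial.isHomogeneous_C (Fin 2) (A k 1)).mul (MvPolynomial.isHomogeneous_X K 1)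

lemma substMat_mono (A : Matrix (Fin 2) (Fin 2) K) (a b : ℕ) :
    substMat A (X 0 ^ a * X 1 ^ b) = linP A 0 ^ a * linP A 1 ^ b := by
  simp [substMat_eq_bind, linP]

lemma homog_substMat_mono (A : Matrix (Fin 2) (Fin 2) K) (a b : ℕ) :
    (substMat A (X 0 ^ a * X 1 ^ b)).IsHomogeneous (a + b) := by
  rw [substMat_mono]
  have h := ((isHomog_linP A 0).pow a).mul ((isHomog_linP A 1).pow b)
  simpa using h

lemma homog_substMat {n : ℕ} (A : Matrix (Fin 2) (Fin 2) K) {P : MvPolynomial (Fin 2) K}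
    (h : P.IsHomogeneous n) : (substMat A P).IsHomogeneous n := by
  rw [rep h, substMat_sum]
  apply MvPolynomial.IsHomogeneous.sum
  intro j hj
  rw [monomial_ee, mul_assoc, substMat_mul, substMat_C]
  have h2 := homog_substMat_mono A (n - j) j
  have h3 : n - j + j = n := by simp at hj; omega
  rw [h3] at h2
  simpa using (MvPolynomial.isHomogeneous_C (Fin 2) (cf n j P)).mul h2

lemma homog_toForm (d : ℕ) (f : ℕ → K) : (toForm d f).IsHomogeneous d := by
  apply MvPolynomial.IsHomogeneous.sum
  intro i hi
  have h2 : ((MvPolynomial.X (0 : Fin 2) : MvPolynomial (Fin 2) K) ^ i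
      * MvPolynomial.X 1 ^ (d - i)).IsHomogeneous (i + (d - i)) := by
    simpa using ((MvPolynomial.isHomogeneous_X K (0 : Fin 2)).pow i).mul
      ((MvPolynomial.isHomogeneous_X K (1 : Fin 2)).pow (d - i))
  have h3 : i + (d - i) = d := by simp at hi; omega
  rw [h3] at h2
  rw [mul_assoc]
  simpa using (MvPolynomial.isHomogeneous_C (Fin 2) (f i)).mul h2

/-- The matrix of the substitution on binary forms of degree `n`. -/
def MM (n : ℕ) (A : Matrix (Fin 2) (Fin 2) K) : Matrix (Fin (n+1)) (Fin (n+1)) K :=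
  Matrix.of fun m j => cf n (j : ℕ) (substMat A (X 0 ^ (n - (m : ℕ)) * X 1 ^ (m : ℕ)))

/-- Coefficients of a substituted homogeneous polynomial. -/
lemma cf_subst {n : ℕ} {P : MvPolynomial (Fin 2) K} (h : P.IsHomogeneous n)
    (A : Matrix (Fin 2) (Fin 2) K) (j : ℕ) :
    cf n j (substMat A P)
      = ∑ m ∈ range (n + 1), cf n m P * cf n j (substMat A (X 0 ^ (n - m) * X 1 ^ m)) := by
  conv_lhs => rw [rep h]
  rw [substMat_sum, cf, MvPolynomial.coeff_sum]
  apply Finset.sum_congr rfl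
  intro m hm
  rw [monomial_ee, mul_assoc, substMat_mul, substMat_C, MvPolynomial.coeff_C_mul]
  rfl

lemma MM_mul (n : ℕ) (A B : Matrix (Fin 2) (Fin 2) K) :
    MM n (A * B) = MM n A * MM n B := by
  ext m j
  rw [Matrix.mul_apply]
  have hhom : (substMat A (X 0 ^ (n - (m:ℕ)) * X 1 ^ (m:ℕ)) : MvPolynomial (Fin 2) K).IsHomogeneous n := by
    have h2 := homog_substMat_mono A (n - (m:ℕ)) (m:ℕ)
    have h3 : n - (m:ℕ) + (m:ℕ) = n := by omega
    rwa [h3] at h2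
  calc MM n (A * B) m j = cf n (j:ℕ) (substMat B (substMat A (X 0 ^ (n - (m:ℕ)) * X 1 ^ (m:ℕ)))) := by
        rw [MM, Matrix.of_apply, substMat_substMat]
      _ = ∑ m' ∈ range (n+1), cf n m' (substMat A (X 0 ^ (n - (m:ℕ)) * X 1 ^ (m:ℕ)))
            * cf n (j:ℕ) (substMat B (X 0 ^ (n - m') * X 1 ^ m')) := cf_subst hhom B _
      _ = ∑ m' : Fin (n+1), MM n A m m' * MM n B m' j := by
        rw [← Fin.sum_univ_eq_sum_range]
        rfl

lemma ee_inj {N j k : ℕ} : ee N j = ee N k ↔ j = k := by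
  constructor
  · intro h
    have := congrArg (fun μ => μ 1) h
    simpa [ee_apply1] using this
  · rintro rfl; rfl

lemma cf_C_X_X (n a b j : ℕ) (h : a + b = n) (c : K) :
    cf n j (C c * X 0 ^ a * X 1 ^ b) = if j = b then c else 0 := by
  obtain rfl : a = n - b := by omega
  have h1 : (C c * X 0 ^ (n - b) * X 1 ^ b : MvPolynomial (Fin 2) K) = monomial (ee n b) c :=
    (monomial_ee n b c).symm
  rw [cf, h1, MvPolynomial.coeff_monomial]
  by_cases hj : j = b
  · subst hj; rw [if_pos rfl, if_pos rfl]
  · rw [if_neg (fun hc => hj (ee_inj.mp hc).symm), if_neg hj]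

/-- the exponent `n(n+1)/2` -/
def Ee (n : ℕ) : ℕ := ∑ i ∈ Finset.range (n + 1), i

lemma MM_diag_eq (n : ℕ) (a e : K) :
    MM n !![a, 0; 0, e] = Matrix.diagonal (fun m : Fin (n+1) => a ^ (n - (m:ℕ)) * e ^ (m:ℕ)) := by
  ext m j
  rw [MM, Matrix.of_apply, substMat_mono]
  have h0 : linP !![a, 0; 0, e] (0 : Fin 2) = C a * X 0 := by simp [linP]
  have h1 : linP !![a, 0; 0, e] (1 : Fin 2) = C e * X 1 := by simp [linP]
  rw [h0, h1]
  have h2 : ((C a * X 0) ^ (n - (m:ℕ)) * (C e * X 1) ^ (m:ℕ) : MvPolynomial (Fin 2) K)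
      = C (a ^ (n - (m:ℕ)) * e ^ (m:ℕ)) * X 0 ^ (n - (m:ℕ)) * X 1 ^ (m:ℕ) := by
    rw [mul_pow, mul_pow, ← MvPolynomial.C_pow, ← MvPolynomial.C_pow, MvPolynomial.C_mul]
    ring
  rw [h2, cf_C_X_X n _ _ _ (by omega), Matrix.diagonal_apply]
  by_cases hj : m = j
  · rw [if_pos (by rw [hj]), if_pos hj]
  · rw [if_neg (fun hc => hj (Fin.ext (by omega))), if_neg hj]

lemma det_MM_diag (n : ℕ) (a e : K) :
    (MM n !![a, 0; 0, e]).det = (a * e) ^ Ee n := by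
  rw [MM_diag_eq, Matrix.det_diagonal, Finset.prod_mul_distrib,
    Finset.prod_pow_eq_pow_sum, Finset.prod_pow_eq_pow_sum]
  have h1 : ∑ m : Fin (n+1), (n - (m:ℕ)) = Ee n := by
    rw [Fin.sum_univ_eq_sum_range (fun i => n - i) (n+1), Ee]
    have := Finset.sum_range_reflect (fun j => j) (n+1)
    simp only [Nat.add_sub_cancel] at this
    calc ∑ i ∈ range (n+1), (n - i) = ∑ i ∈ range (n+1), (n + 1 - 1 - i) := by
          apply Finset.sum_congr rfl; intro i hi; congr 1
        _ = ∑ i ∈ range (n+1), i := Finset.sum_range_reflect (fun j => j) (n+1)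
  have h2 : ∑ m : Fin (n+1), (m:ℕ) = Ee n := by
    rw [Fin.sum_univ_eq_sum_range (fun i => i) (n+1), Ee]
  rw [h1, h2, mul_pow]

lemma shearU_subst (n m : ℕ) (t : K) :
    substMat !![1, t; 0, 1] (X 0 ^ (n - m) * X 1 ^ m : MvPolynomial (Fin 2) K)
      = (X 0 + C t * X 1) ^ (n - m) * X 1 ^ m := by
  rw [substMat_mono]
  have h0 : linP !![1, t; 0, 1] (0 : Fin 2) = X 0 + C t * X 1 := by simp [linP]
  have h1 : linP !![1, t; 0, 1] (1 : Fin 2) = X 1 := by simp [linP]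
  rw [h0, h1]

lemma shearL_subst (n m : ℕ) (t : K) :
    substMat !![1, 0; t, 1] (X 0 ^ (n - m) * X 1 ^ m : MvPolynomial (Fin 2) K)
      = X 0 ^ (n - m) * (C t * X 0 + X 1) ^ m := by
  rw [substMat_mono]
  have h0 : linP !![1, 0; t, 1] (0 : Fin 2) = X 0 := by simp [linP]
  have h1 : linP !![1, 0; t, 1] (1 : Fin 2) = C t * X 0 + X 1 := by simp [linP]
  rw [h0, h1]

lemma cf_shearU (n : ℕ) (m j : Fin (n+1)) (t : K) :
    MM n !![1, t; 0, 1] m j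
      = ∑ k ∈ range (n - (m:ℕ) + 1),
          (if (j:ℕ) = n - k then t ^ (n - (m:ℕ) - k) * ((n - (m:ℕ)).choose k : K) else 0) := by
  rw [MM, Matrix.of_apply, shearU_subst, add_pow, Finset.sum_mul, cf, MvPolynomial.coeff_sum]
  apply Finset.sum_congr rfl
  intro k hk
  have hk' : k ≤ n - (m:ℕ) := by simp at hk; omega
  have hterm : (X 0 ^ k * (C t * X 1) ^ (n - (m:ℕ) - k) * ((n - (m:ℕ)).choose k : MvPolynomial (Fin 2) K) * X 1 ^ (m:ℕ))
      = C (t ^ (n - (m:ℕ) - k) * ((n - (m:ℕ)).choose k : K)) * X 0 ^ k * X 1 ^ (n - k) := by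
    have hexp : (n - (m:ℕ) - k) + (m:ℕ) = n - k := by omega
    rw [← hexp, mul_pow, ← MvPolynomial.C_pow, ← MvPolynomial.C_eq_coe_nat, MvPolynomial.C_mul,
      pow_add]
    push_cast
    ring
  rw [hterm]
  exact cf_C_X_X n k (n - k) (j:ℕ) (by omega) _

lemma cf_shearL (n : ℕ) (m j : Fin (n+1)) (t : K) :
    MM n !![1, 0; t, 1] m j
      = ∑ k ∈ range ((m:ℕ) + 1),
          (if (j:ℕ) = (m:ℕ) - k then t ^ k * (((m:ℕ)).choose k : K) else 0) := by
  rw [MM, Matrix.of_apply, shearL_subst, add_pow, Finset.mul_sum, cf, MvPolynomial.coeff_sum]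
  apply Finset.sum_congr rfl
  intro k hk
  have hk' : k ≤ (m:ℕ) := by simp at hk; omega
  have hterm : (X 0 ^ (n - (m:ℕ)) * ((C t * X 0) ^ k * X 1 ^ ((m:ℕ) - k) * (((m:ℕ)).choose k : MvPolynomial (Fin 2) K)))
      = C (t ^ k * (((m:ℕ)).choose k : K)) * X 0 ^ (n - (m:ℕ) + k) * X 1 ^ ((m:ℕ) - k) := by
    rw [mul_pow, ← MvPolynomial.C_pow, ← MvPolynomial.C_eq_coe_nat, MvPolynomial.C_mul, pow_add]
    ring
  rw [hterm]
  exact cf_C_X_X n (n - (m:ℕ) + k) ((m:ℕ) - k) (j:ℕ) (by omega) _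

lemma det_MM_upper (n : ℕ) (t : K) : (MM n !![1, t; 0, 1]).det = 1 := by
  have htri : (MM n !![1, t; 0, 1]).BlockTriangular id := by
    intro m j hlt
    rw [cf_shearU]
    apply Finset.sum_eq_zero
    intro k hk
    simp only [Finset.mem_range] at hk
    rw [if_neg (by simp only [id] at hlt; omega)]
  rw [Matrix.det_of_upperTriangular htri]
  have hdiag : ∀ m : Fin (n+1), MM n !![1, t; 0, 1] m m = 1 := by
    intro m
    rw [cf_shearU, Finset.sum_eq_single_of_mem (n - (m:ℕ)) (by simp)]
    · rw [if_pos (by omega)]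
      simp
    · intro k hk hkne
      simp only [Finset.mem_range] at hk
      rw [if_neg (by omega)]
  rw [Finset.prod_congr rfl (fun m _ => hdiag m), Finset.prod_const_one]

lemma det_MM_lower (n : ℕ) (t : K) : (MM n !![1, 0; t, 1]).det = 1 := by
  have htri : (MM n !![1, 0; t, 1]).BlockTriangular OrderDual.toDual := by
    intro m j hlt
    rw [cf_shearL]
    apply Finset.sum_eq_zero
    intro k hk
    simp only [Finset.mem_range] at hk
    have hlt' : (m:ℕ) < (j:ℕ) := hlt
    rw [if_neg (by omega)]
  rw [Matrix.det_of_lowerTriangular _ htri]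
  have hdiag : ∀ m : Fin (n+1), MM n !![1, 0; t, 1] m m = 1 := by
    intro m
    rw [cf_shearL, Finset.sum_eq_single_of_mem 0 (by simp)]
    · rw [if_pos (by omega)]
      simp
    · intro k hk hkne
      simp only [Finset.mem_range] at hk
      rw [if_neg (by omega)]
  rw [Finset.prod_congr rfl (fun m _ => hdiag m), Finset.prod_const_one]

section FieldPart

variable {F : Type*} [Field F]

lemma det_MM_posδ (n : ℕ) (A : Matrix (Fin 2) (Fin 2) F) (hA : A.det ≠ 0) (hδ : A 1 1 ≠ 0) :
    (MM n A).det = A.det ^ Ee n := by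
  have hdecomp : A = !![1, A 0 1 / A 1 1; 0, 1] * !![A.det / A 1 1, 0; 0, A 1 1]
      * !![1, 0; A 1 0 / A 1 1, 1] := by
    ext i j
    rw [Matrix.det_fin_two]
    fin_cases i <;> fin_cases j <;>
      (simp [Matrix.mul_apply, Fin.sum_univ_two]; try field_simp; try ring)
  have h1 : (MM n A).det = A.det ^ Ee n := by
    conv_lhs => rw [hdecomp]
    rw [MM_mul, MM_mul, Matrix.det_mul, Matrix.det_mul, det_MM_upper, det_MM_lower,
      det_MM_diag]
    field_simp
  exact h1

lemma det_MM (n : ℕ) (A : Matrix (Fin 2) (Fin 2) F) (hA : A.det ≠ 0) :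
    (MM n A).det = A.det ^ Ee n := by
  by_cases hδ : A 1 1 ≠ 0
  · exact det_MM_posδ n A hA hδ
  · push_neg at hδ
    have hγ : A 1 0 ≠ 0 := by
      intro h0
      apply hA
      rw [Matrix.det_fin_two, hδ, h0]
      ring
    have key : A = (A * !![1, 1; 0, 1]) * !![1, -1; 0, 1] := by
      ext i j
      fin_cases i <;> fin_cases j <;> (simp [Matrix.mul_apply, Fin.sum_univ_two]; try ring)
    have hB : ((A * !![1, 1; 0, 1] : Matrix (Fin 2) (Fin 2) F)) 1 1 = A 1 0 := by
      simp [Matrix.mul_apply, Fin.sum_univ_two, hδ]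
    have hBdet : (A * !![1, 1; 0, 1]).det = A.det := by
      rw [Matrix.det_mul, Matrix.det_fin_two_of]
      ring
    have h2 := det_MM_posδ n (A * !![1, 1; 0, 1]) (by rw [hBdet]; exact hA) (by rw [hB]; exact hγ)
    calc (MM n A).det = (MM n ((A * !![1, 1; 0, 1]) * !![1, -1; 0, 1])).det := by rw [← key]
      _ = (MM n (A * !![1, 1; 0, 1])).det * (MM n !![1, -1; 0, 1]).det := by
          rw [MM_mul, Matrix.det_mul]
      _ = A.det ^ Ee n := by rw [h2, det_MM_upper, hBdet, mul_one]
end FieldPart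

/-- The key row lemma: rows of the Sylvester matrix are coefficient vectors of `X^(d-1-i) Y^i P`. -/
lemma rowEq {d : ℕ} (hd : 1 ≤ d) {P : MvPolynomial (Fin 2) K} (hP : P.IsHomogeneous d)
    {p : ℕ → K}
    (hp : ∀ k, k ≤ d →
      p k = MvPolynomial.coeff (Finsupp.single (0 : Fin 2) k + Finsupp.single 1 (d - k)) P)
    (i j : ℕ) (hi : i < d) (hj : j < 2 * d) :
    (if i ≤ j ∧ j ≤ i + d then p (d - (j - i)) else 0)
      = cf (2 * d - 1) j (X 0 ^ (d - 1 - i) * X 1 ^ i * P) := by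
  have hmul : (X 0 ^ (d - 1 - i) * X 1 ^ i * P : MvPolynomial (Fin 2) K)
      = ∑ m ∈ range (d + 1), monomial (ee (2 * d - 1) (i + m)) (cf d m P) := by
    conv_lhs => rw [rep hP]
    rw [Finset.mul_sum]
    apply Finset.sum_congr rfl
    intro m hm
    have hm' : m ≤ d := by simp at hm; omega
    rw [monomial_ee, monomial_ee]
    have e1 : 2 * d - 1 - (i + m) = (d - 1 - i) + (d - m) := by omega
    have e2 : d - 1 - i + (d - m) = (d - 1 - i) + (d - m) := rfl
    rw [e1, pow_add]
    have e3 : i + m = i + m := rfl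
    rw [pow_add (X 1 : MvPolynomial (Fin 2) K) i m]
    ring
  rw [hmul, cf, MvPolynomial.coeff_sum]
  simp only [MvPolynomial.coeff_monomial]
  by_cases hband : i ≤ j ∧ j ≤ i + d
  · rw [if_pos hband, Finset.sum_eq_single_of_mem (j - i) (by simp; omega)]
    · rw [if_pos (by rw [ee_inj]; omega)]
      rw [hp (d - (j - i)) (by omega), cf]
      congr 1
      rw [ee, show d - (d - (j - i)) = j - i by omega]
    · intro m hm hne
      rw [if_neg]
      rw [ee_inj]
      omega
  · rw [if_neg hband, eq_comm]
    apply Finset.sum_eq_zero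
    intro m hm
    simp only [Finset.mem_range] at hm
    rw [if_neg]
    rw [ee_inj]
    omega

/-- The reindexing `Fin 2 × Fin d ≃ Fin (d + d)`, `(b, i) ↦ b·d + i`. -/
def eRC (d : ℕ) : (Fin 2 × Fin d) ≃ Fin (d + d) where
  toFun bi := ⟨(bi.1 : ℕ) * d + (bi.2 : ℕ), by
    have h1 : (bi.1 : ℕ) < 2 := bi.1.isLt
    have h2 : (bi.2 : ℕ) < d := bi.2.isLt
    have hb : (bi.1 : ℕ) = 0 ∨ (bi.1 : ℕ) = 1 := by omega
    rcases hb with h | h <;> rw [h] <;> omega⟩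
  invFun j := if h : (j : ℕ) < d then (0, ⟨j, h⟩) else (1, ⟨(j : ℕ) - d, by omega⟩)
  left_inv := by
    rintro ⟨b, i⟩
    dsimp only
    have h2 : (i : ℕ) < d := i.isLt
    by_cases hb : (b : ℕ) = 0
    · rw [dif_pos (show (b:ℕ)*d + (i:ℕ) < d by rw [hb]; omega)]
      have hb' : b = 0 := Fin.ext hb
      subst hb'
      exact Prod.ext rfl (Fin.ext (by simp))
    · have hb1 : (b : ℕ) = 1 := by omega
      rw [dif_neg (show ¬ ((b:ℕ)*d + (i:ℕ) < d) by rw [hb1]; omega)]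
      have hb' : b = 1 := Fin.ext hb1
      subst hb'
      exact Prod.ext rfl (Fin.ext (by simp))
  right_inv := by
    intro j
    dsimp only
    by_cases h : (j : ℕ) < d
    · rw [dif_pos h]
      exact Fin.ext (by simp)
    · rw [dif_neg h]
      refine Fin.ext ?_
      have : (j : ℕ) < d + d := j.isLt
      simp
      omega

lemma eRC_val {d : ℕ} (b : Fin 2) (i : Fin d) :
    ((eRC d (b, i)) : ℕ) = (b : ℕ) * d + (i : ℕ) := rfl

/-- The Sylvester matrix (same as in `sylRes d d`). -/
def SylO (d : ℕ) (p q : ℕ → K) : Matrix (Fin (d + d)) (Fin (d + d)) K :=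
  Matrix.of fun i j : Fin (d + d) =>
    if (i : ℕ) < d then
      (if (i : ℕ) ≤ (j : ℕ) ∧ (j : ℕ) ≤ (i : ℕ) + d then p (d - ((j : ℕ) - (i : ℕ))) else 0)
    else
      (if (i : ℕ) - d ≤ (j : ℕ) ∧ (j : ℕ) ≤ ((i : ℕ) - d) + d then
        q (d - ((j : ℕ) - ((i : ℕ) - d))) else 0)

lemma sylRes_eq_det (d : ℕ) (p q : ℕ → K) : sylRes d d p q = (SylO d p q).det := rfl

/-- Sylvester matrix reindexed by `Fin 2 × Fin d`. -/
def SylT (d : ℕ) (p q : ℕ → K) : Matrix (Fin 2 × Fin d) (Fin 2 × Fin d) K :=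
  (SylO d p q).submatrix (eRC d) (eRC d)

lemma det_SylT (d : ℕ) (p q : ℕ → K) : (SylT d p q).det = sylRes d d p q := by
  rw [SylT, Matrix.det_submatrix_equiv_self, sylRes_eq_det]

/-- The coefficient-row matrix. -/
def RowM (d : ℕ) (P Q : MvPolynomial (Fin 2) K) : Matrix (Fin 2 × Fin d) (Fin 2 × Fin d) K :=
  Matrix.of fun bi cj =>
    cf (2 * d - 1) ((cj.1 : ℕ) * d + (cj.2 : ℕ))
      (X 0 ^ (d - 1 - (bi.2 : ℕ)) * X 1 ^ (bi.2 : ℕ) * (if bi.1 = 0 then P else Q))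

lemma SylT_eq_RowM {d : ℕ} (hd : 1 ≤ d) {P Q : MvPolynomial (Fin 2) K}
    (hP : P.IsHomogeneous d) (hQ : Q.IsHomogeneous d) {p q : ℕ → K}
    (hp : ∀ k, k ≤ d →
      p k = MvPolynomial.coeff (Finsupp.single (0 : Fin 2) k + Finsupp.single 1 (d - k)) P)
    (hq : ∀ k, k ≤ d →
      q k = MvPolynomial.coeff (Finsupp.single (0 : Fin 2) k + Finsupp.single 1 (d - k)) Q) :
    SylT d p q = RowM d P Q := by
  ext ⟨b, i⟩ ⟨c, j⟩
  have hcval : ((eRC d (c, j)) : ℕ) = (c : ℕ) * d + (j : ℕ) := eRC_val c j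
  have hcol : ((c : ℕ) * d + (j : ℕ)) < 2 * d := by
    have h1 : (c : ℕ) < 2 := c.isLt
    have h2 : (j : ℕ) < d := j.isLt
    have hb : (c : ℕ) = 0 ∨ (c : ℕ) = 1 := by omega
    rcases hb with h | h <;> rw [h] <;> omega
  fin_cases b
  · show SylT d p q ((0 : Fin 2), i) (c, j) = RowM d P Q ((0 : Fin 2), i) (c, j)
    have hrval : ((eRC d ((0 : Fin 2), i)) : ℕ) = (i : ℕ) := by
      rw [eRC_val]; simp
    have lhs : SylT d p q ((0 : Fin 2), i) (c, j)
        = if (i : ℕ) ≤ ((c : ℕ) * d + (j : ℕ)) ∧ ((c : ℕ) * d + (j : ℕ)) ≤ (i : ℕ) + d then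
            p (d - (((c : ℕ) * d + (j : ℕ)) - (i : ℕ))) else 0 := by
      rw [SylT, Matrix.submatrix_apply, SylO, Matrix.of_apply, hrval, hcval, if_pos i.isLt]
    rw [lhs, RowM, Matrix.of_apply,
      show (if (((0 : Fin 2), i)).1 = 0 then P else Q) = P from if_pos rfl]
    exact rowEq hd hP hp (i : ℕ) _ i.isLt hcol
  · show SylT d p q ((1 : Fin 2), i) (c, j) = RowM d P Q ((1 : Fin 2), i) (c, j)
    have hrval : ((eRC d ((1 : Fin 2), i)) : ℕ) = d + (i : ℕ) := by
      rw [eRC_val]; simp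
    have lhs : SylT d p q ((1 : Fin 2), i) (c, j)
        = if (i : ℕ) ≤ ((c : ℕ) * d + (j : ℕ)) ∧ ((c : ℕ) * d + (j : ℕ)) ≤ (i : ℕ) + d then
            q (d - (((c : ℕ) * d + (j : ℕ)) - (i : ℕ))) else 0 := by
      rw [SylT, Matrix.submatrix_apply, SylO, Matrix.of_apply, hrval, hcval,
        if_neg (by omega), show d + (i : ℕ) - d = (i : ℕ) by omega]
    rw [lhs, RowM, Matrix.of_apply,
      show (if (((1 : Fin 2), i)).1 = 0 then P else Q) = Q from if_neg (by norm_num)]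
    exact rowEq hd hQ hq (i : ℕ) _ i.isLt hcol

lemma cf_smul (N J : ℕ) (u : K) (R : MvPolynomial (Fin 2) K) :
    cf N J (C u * R) = u * cf N J R := by
  rw [cf, cf, MvPolynomial.coeff_C_mul]

lemma cf_add (N J : ℕ) (R S : MvPolynomial (Fin 2) K) :
    cf N J (R + S) = cf N J R + cf N J S := by
  rw [cf, cf, cf, MvPolynomial.coeff_add]

/-- The twist step: multiplying the pair `(P,Q)` by a 2×2 matrix of constants. -/
lemma twist (d : ℕ) (B : Matrix (Fin 2) (Fin 2) K) (P Q : MvPolynomial (Fin 2) K) :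
    (Matrix.kroneckerMap (· * ·) B (1 : Matrix (Fin d) (Fin d) K)) * RowM d P Q
      = RowM d (C (B 0 0) * P + C (B 0 1) * Q) (C (B 1 0) * P + C (B 1 1) * Q) := by
  ext ⟨b, i⟩ ⟨c, j⟩
  rw [Matrix.mul_apply, Fintype.sum_prod_type]
  have hsum : ∀ b' : Fin 2,
      ∑ k : Fin d, (Matrix.kroneckerMap (· * ·) B (1 : Matrix (Fin d) (Fin d) K)) (b, i) (b', k)
        * RowM d P Q (b', k) (c, j) = B b b' * RowM d P Q (b', i) (c, j) := by
    intro b'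
    rw [Finset.sum_eq_single_of_mem i (Finset.mem_univ i)]
    · rw [Matrix.kroneckerMap_apply, Matrix.one_apply_eq, mul_one]
    · intro k _ hk
      rw [Matrix.kroneckerMap_apply, Matrix.one_apply_ne (Ne.symm hk), mul_zero, zero_mul]
  rw [Finset.sum_congr rfl (fun b' _ => hsum b'), Fin.sum_univ_two]
  have key : ∀ (u v : K),
      u * RowM d P Q ((0 : Fin 2), i) (c, j) + v * RowM d P Q ((1 : Fin 2), i) (c, j)
        = cf (2 * d - 1) ((c : ℕ) * d + (j : ℕ))
            (X 0 ^ (d - 1 - (i : ℕ)) * X 1 ^ (i : ℕ) * (C u * P + C v * Q)) := by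
    intro u v
    rw [RowM, Matrix.of_apply, Matrix.of_apply,
      show (if (((0 : Fin 2), i)).1 = 0 then P else Q) = P from if_pos rfl,
      show (if (((1 : Fin 2), i)).1 = 0 then P else Q) = Q from if_neg (by norm_num),
      show (X 0 ^ (d - 1 - (i : ℕ)) * X 1 ^ (i : ℕ) * (C u * P + C v * Q) : MvPolynomial (Fin 2) K)
        = C u * (X 0 ^ (d - 1 - (i : ℕ)) * X 1 ^ (i : ℕ) * P)
          + C v * (X 0 ^ (d - 1 - (i : ℕ)) * X 1 ^ (i : ℕ) * Q) from by ring,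
      cf_add, cf_smul, cf_smul]
  fin_cases b
  · show B 0 0 * RowM d P Q ((0 : Fin 2), i) (c, j) + B 0 1 * RowM d P Q ((1 : Fin 2), i) (c, j)
      = RowM d (C (B 0 0) * P + C (B 0 1) * Q) (C (B 1 0) * P + C (B 1 1) * Q) ((0 : Fin 2), i) (c, j)
    rw [key, RowM, Matrix.of_apply,
      show (if (((0 : Fin 2), i)).1 = 0 then C (B 0 0) * P + C (B 0 1) * Q
        else C (B 1 0) * P + C (B 1 1) * Q) = C (B 0 0) * P + C (B 0 1) * Q from if_pos rfl]
  · show B 1 0 * RowM d P Q ((0 : Fin 2), i) (c, j) + B 1 1 * RowM d P Q ((1 : Fin 2), i) (c, j)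
      = RowM d (C (B 0 0) * P + C (B 0 1) * Q) (C (B 1 0) * P + C (B 1 1) * Q) ((1 : Fin 2), i) (c, j)
    rw [key, RowM, Matrix.of_apply,
      show (if (((1 : Fin 2), i)).1 = 0 then C (B 0 0) * P + C (B 0 1) * Q
        else C (B 1 0) * P + C (B 1 1) * Q) = C (B 1 0) * P + C (B 1 1) * Q from if_neg (by norm_num)]

/-- reindexing into the size used by `MM (2*d-1)`. -/
def eM (d : ℕ) (hd : 1 ≤ d) : (Fin 2 × Fin d) ≃ Fin (2 * d - 1 + 1) :=
  (eRC d).trans (finCongr (by omega))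

lemma eM_val {d : ℕ} (hd : 1 ≤ d) (b : Fin 2) (i : Fin d) :
    ((eM d hd (b, i)) : ℕ) = (b : ℕ) * d + (i : ℕ) := rfl

lemma homog_mono_mul {d : ℕ} (i : ℕ) (hi : i < d) {P : MvPolynomial (Fin 2) K}
    (hP : P.IsHomogeneous d) :
    (X 0 ^ (d - 1 - i) * X 1 ^ i * P).IsHomogeneous (2 * d - 1) := by
  have h := (((MvPolynomial.isHomogeneous_X K (0 : Fin 2)).pow (d - 1 - i)).mul
    ((MvPolynomial.isHomogeneous_X K (1 : Fin 2)).pow i)).mul hP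
  have he : 1 * (d - 1 - i) + 1 * i + d = 2 * d - 1 := by omega
  rwa [he] at h

/-- The master identity. -/
lemma master {d : ℕ} (hd : 1 ≤ d) (A : Matrix (Fin 2) (Fin 2) K)
    {P Q : MvPolynomial (Fin 2) K} (hP : P.IsHomogeneous d) (hQ : Q.IsHomogeneous d) :
    RowM d P Q * (MM (2 * d - 1) A).submatrix (eM d hd) (eM d hd)
      = Matrix.kroneckerMap (· * ·) (1 : Matrix (Fin 2) (Fin 2) K)
          ((MM (d - 1) A).submatrix (finCongr (by omega : d = d - 1 + 1))
            (finCongr (by omega : d = d - 1 + 1)))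
        * RowM d (substMat A P) (substMat A Q) := by
  set Ds : Matrix (Fin d) (Fin d) K := (MM (d - 1) A).submatrix (finCongr (by omega : d = d - 1 + 1))
      (finCongr (by omega : d = d - 1 + 1)) with hDs
  ext ⟨b, i⟩ ⟨c, j⟩
  set Pb : MvPolynomial (Fin 2) K := if b = 0 then P else Q with hPbdef
  have hPb : Pb.IsHomogeneous d := by
    rw [hPbdef]; split <;> assumption
  set colJ : ℕ := (c : ℕ) * d + (j : ℕ) with hcolJ
  have hmono : (X 0 ^ (d - 1 - (i : ℕ)) * X 1 ^ (i : ℕ) * Pb).IsHomogeneous (2 * d - 1) :=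
    homog_mono_mul (i : ℕ) i.isLt hPb
  -- LHS
  have hlhs : (RowM d P Q * (MM (2 * d - 1) A).submatrix (eM d hd) (eM d hd)) (b, i) (c, j)
      = cf (2 * d - 1) colJ (substMat A (X 0 ^ (d - 1 - (i : ℕ)) * X 1 ^ (i : ℕ) * Pb)) := by
    rw [Matrix.mul_apply]
    rw [Fintype.sum_equiv (eM d hd)
      (fun x => RowM d P Q (b, i) x * (MM (2 * d - 1) A).submatrix (eM d hd) (eM d hd) x (c, j))
      (fun y => cf (2 * d - 1) (y : ℕ) (X 0 ^ (d - 1 - (i : ℕ)) * X 1 ^ (i : ℕ) * Pb)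
        * MM (2 * d - 1) A y (eM d hd (c, j)))
      (by
        rintro ⟨b', k⟩
        rw [Matrix.submatrix_apply, RowM, Matrix.of_apply, eM_val hd b' k]
        try rw [← hPbdef]
        try rfl)]
    rw [cf_subst hmono A colJ, ← Fin.sum_univ_eq_sum_range
      (fun m => cf (2 * d - 1) m (X 0 ^ (d - 1 - (i : ℕ)) * X 1 ^ (i : ℕ) * Pb)
        * cf (2 * d - 1) colJ (substMat A (X 0 ^ (2 * d - 1 - m) * X 1 ^ m)))
      (2 * d - 1 + 1)]
    apply Finset.sum_congr rfl
    intro x _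
    rfl
  -- RHS
  have hrhs : (Matrix.kroneckerMap (· * ·) (1 : Matrix (Fin 2) (Fin 2) K) Ds
        * RowM d (substMat A P) (substMat A Q)) (b, i) (c, j)
      = ∑ k : Fin d, Ds i k
          * cf (2 * d - 1) colJ (X 0 ^ (d - 1 - (k : ℕ)) * X 1 ^ (k : ℕ) * substMat A Pb) := by
    rw [Matrix.mul_apply, Fintype.sum_prod_type]
    have hsum : ∀ b' : Fin 2,
        ∑ k : Fin d, (Matrix.kroneckerMap (· * ·) (1 : Matrix (Fin 2) (Fin 2) K) Ds) (b, i) (b', k)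
          * RowM d (substMat A P) (substMat A Q) (b', k) (c, j)
        = (1 : Matrix (Fin 2) (Fin 2) K) b b'
          * ∑ k : Fin d, Ds i k * RowM d (substMat A P) (substMat A Q) (b', k) (c, j) := by
      intro b'
      rw [Finset.mul_sum]
      apply Finset.sum_congr rfl
      intro k _
      rw [Matrix.kroneckerMap_apply, mul_assoc]
    rw [Finset.sum_congr rfl (fun b' _ => hsum b'), Finset.sum_eq_single_of_mem b
      (Finset.mem_univ b)]
    · rw [Matrix.one_apply_eq, one_mul]
      apply Finset.sum_congr rfl
      intro k _
      congr 1
      rw [RowM, Matrix.of_apply]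
      congr 1
      rw [hPbdef, apply_ite (substMat A)]
    · intro b' _ hb'
      rw [Matrix.one_apply_ne (Ne.symm hb'), zero_mul]
  rw [hlhs, hrhs]
  -- the core computation
  rw [substMat_mul]
  set QQ : MvPolynomial (Fin 2) K := substMat A (X 0 ^ (d - 1 - (i : ℕ)) * X 1 ^ (i : ℕ)) with hQQ
  have hQQh : QQ.IsHomogeneous (d - 1) := by
    have h := homog_substMat_mono A (d - 1 - (i : ℕ)) (i : ℕ)
    have he : d - 1 - (i : ℕ) + (i : ℕ) = d - 1 := by have := i.isLt; omega
    rwa [he] at h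
  have hDsval : ∀ k : Fin d, Ds i k = cf (d - 1) (k : ℕ) QQ := by
    intro k
    rw [hDs, Matrix.submatrix_apply, MM, Matrix.of_apply, hQQ]
    rfl
  calc cf (2 * d - 1) colJ (QQ * substMat A Pb)
      = ∑ m ∈ range (d - 1 + 1), cf (d - 1) m QQ
          * cf (2 * d - 1) colJ (X 0 ^ (d - 1 - m) * X 1 ^ m * substMat A Pb) := by
        conv_lhs => rw [rep hQQh]
        rw [Finset.sum_mul, cf, MvPolynomial.coeff_sum]
        apply Finset.sum_congr rfl
        intro m hm
        rw [show (monomial (ee (d - 1) m)) (cf (d - 1) m QQ) * substMat A Pb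
          = C (cf (d - 1) m QQ) * (X 0 ^ (d - 1 - m) * X 1 ^ m * substMat A Pb) from by
            rw [monomial_ee]; ring, MvPolynomial.coeff_C_mul]
        rfl
    _ = ∑ k : Fin d, Ds i k
          * cf (2 * d - 1) colJ (X 0 ^ (d - 1 - (k : ℕ)) * X 1 ^ (k : ℕ) * substMat A Pb) := by
        rw [show d - 1 + 1 = d from by omega, ← Fin.sum_univ_eq_sum_range
          (fun m => cf (d - 1) m QQ
            * cf (2 * d - 1) colJ (X 0 ^ (d - 1 - m) * X 1 ^ m * substMat A Pb)) d]
        apply Finset.sum_congr rfl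
        intro k _
        rw [hDsval k]

lemma coeff_toForm {d k : ℕ} (hk : k ≤ d) (f : ℕ → K) :
    MvPolynomial.coeff (Finsupp.single (0 : Fin 2) k + Finsupp.single 1 (d - k))
      (toForm d f) = f k := by
  have hμ : (Finsupp.single (0 : Fin 2) k + Finsupp.single 1 (d - k)) = ee d (d - k) := by
    rw [ee, show d - (d - k) = k from by omega]
  rw [hμ, toForm]
  have hterm : ∀ i ∈ range (d + 1),
      (MvPolynomial.C (f i) * MvPolynomial.X (0 : Fin 2) ^ i * MvPolynomial.X 1 ^ (d - i)
        : MvPolynomial (Fin 2) K) = monomial (ee d (d - i)) (f i) := by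
    intro i hi
    have hi' : i ≤ d := by simp at hi; omega
    rw [monomial_ee, show d - (d - i) = i from by omega]
  rw [Finset.sum_congr rfl hterm, MvPolynomial.coeff_sum]
  simp only [MvPolynomial.coeff_monomial]
  rw [Finset.sum_eq_single_of_mem k (by simp; omega)]
  · rw [if_pos rfl]
  · intro i hi hne
    simp only [Finset.mem_range] at hi
    rw [if_neg]
    rw [ee_inj]
    omega

lemma Ee_split {d : ℕ} (hd : 2 ≤ d) : Ee (2 * d - 1) = 2 * Ee (d - 1) + d ^ 2 := by
  obtain ⟨m, rfl⟩ : ∃ m, d = m + 2 := ⟨d - 2, by omega⟩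
  have g1 := Finset.sum_range_id_mul_two (2 * m + 4)
  have g2 := Finset.sum_range_id_mul_two (m + 2)
  rw [show 2 * m + 4 - 1 = 2 * m + 3 from by omega] at g1
  rw [show m + 2 - 1 = m + 1 from by omega] at g2
  have hE1 : Ee (2 * (m + 2) - 1) = ∑ i ∈ range (2 * m + 4), i := by
    rw [Ee, show 2 * (m + 2) - 1 + 1 = 2 * m + 4 from by omega]
  have hE2 : Ee (m + 2 - 1) = ∑ i ∈ range (m + 2), i := by
    rw [Ee, show m + 2 - 1 + 1 = m + 2 from by omega]
  rw [hE1, hE2]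
  set a := ∑ i ∈ range (2 * m + 4), i with ha
  set b := ∑ i ∈ range (m + 2), i with hb
  have key : a * 2 = (2 * b + (m + 2) ^ 2) * 2 := by
    rw [g1]
    calc (2 * m + 4) * (2 * m + 3) = 2 * (b * 2) + (m + 2) ^ 2 * 2 := by rw [g2]; ring
      _ = (2 * b + (m + 2) ^ 2) * 2 := by ring
  omega

end Res0Aux


open Res0Aux MvPolynomial Finset Matrix

/-- For binary degree-`d` forms `F, G` over a field `K` (given by coefficient
sequences `f`, `g`), every `λ ∈ K^×` and `A ∈ GL₂(K)` satisfy
`Res_d(λF_A, λG_A) = λ^(2d) · det(A)^(d²+d) · Res_d(F,G)`. -/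
theorem statement0 {K : Type*} [Field K] (d : ℕ) (hd : 2 ≤ d) (f g : ℕ → K)
    (hf : ∀ i, d < i → f i = 0) (hg : ∀ i, d < i → g i = 0)
    (l : K) (hl : l ≠ 0) (A : Matrix (Fin 2) (Fin 2) K) (hA : A.det ≠ 0) :
    sylRes d d (fun i => l * FA d f g A i) (fun i => l * GA d f g A i) =
      l ^ (2 * d) * A.det ^ (d ^ 2 + d) * sylRes d d f g := by

  have hd1 : 1 ≤ d := by omega
  set p : ℕ → K := fun i => l * FA d f g A i with hpdef
  set q : ℕ → K := fun i => l * GA d f g A i with hqdef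
  set Ff : MvPolynomial (Fin 2) K := toForm d f with hFf
  set Gg : MvPolynomial (Fin 2) K := toForm d g with hGg
  set F' : MvPolynomial (Fin 2) K := substMat A Ff with hF'
  set G' : MvPolynomial (Fin 2) K := substMat A Gg with hG'
  have hFfh : Ff.IsHomogeneous d := homog_toForm d f
  have hGgh : Gg.IsHomogeneous d := homog_toForm d g
  have hF'h : F'.IsHomogeneous d := homog_substMat A hFfh
  have hG'h : G'.IsHomogeneous d := homog_substMat A hGgh
  have hCmul : ∀ (u : K) {R : MvPolynomial (Fin 2) K}, R.IsHomogeneous d →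
      (C u * R).IsHomogeneous d := by
    intro u R hR
    simpa using (MvPolynomial.isHomogeneous_C (Fin 2) u).mul hR
  set B : Matrix (Fin 2) (Fin 2) K :=
    !![l * A 1 1, -(l * A 0 1); -(l * A 1 0), l * A 0 0] with hB
  have hB00 : B 0 0 = l * A 1 1 := by rw [hB]; simp
  have hB01 : B 0 1 = -(l * A 0 1) := by rw [hB]; simp
  have hB10 : B 1 0 = -(l * A 1 0) := by rw [hB]; simp
  have hB11 : B 1 1 = l * A 0 0 := by rw [hB]; simp
  set P0 : MvPolynomial (Fin 2) K := C (B 0 0) * F' + C (B 0 1) * G' with hP0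
  set P1 : MvPolynomial (Fin 2) K := C (B 1 0) * F' + C (B 1 1) * G' with hP1
  have hP0h : P0.IsHomogeneous d := (hCmul _ hF'h).add (hCmul _ hG'h)
  have hP1h : P1.IsHomogeneous d := (hCmul _ hF'h).add (hCmul _ hG'h)
  have hp : ∀ k, k ≤ d → p k =
      MvPolynomial.coeff (Finsupp.single (0 : Fin 2) k + Finsupp.single 1 (d - k)) P0 := by
    intro k hk
    have h1 : p k = l * MvPolynomial.coeff
        (Finsupp.single (0 : Fin 2) k + Finsupp.single 1 (d - k))
        (C (A 1 1) * F' - C (A 0 1) * G') := rfl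
    rw [h1, ← MvPolynomial.coeff_C_mul]
    congr 1
    rw [hP0, hB00, hB01, map_neg, MvPolynomial.C_mul, MvPolynomial.C_mul]
    ring
  have hq : ∀ k, k ≤ d → q k =
      MvPolynomial.coeff (Finsupp.single (0 : Fin 2) k + Finsupp.single 1 (d - k)) P1 := by
    intro k hk
    have h1 : q k = l * MvPolynomial.coeff
        (Finsupp.single (0 : Fin 2) k + Finsupp.single 1 (d - k))
        (-(C (A 1 0)) * F' + C (A 0 0) * G') := rfl
    rw [h1, ← MvPolynomial.coeff_C_mul]
    congr 1
    rw [hP1, hB10, hB11, map_neg, MvPolynomial.C_mul, MvPolynomial.C_mul]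
    ring
  have hf' : ∀ k, k ≤ d → f k =
      MvPolynomial.coeff (Finsupp.single (0 : Fin 2) k + Finsupp.single 1 (d - k)) Ff :=
    fun k hk => (coeff_toForm hk f).symm
  have hg' : ∀ k, k ≤ d → g k =
      MvPolynomial.coeff (Finsupp.single (0 : Fin 2) k + Finsupp.single 1 (d - k)) Gg :=
    fun k hk => (coeff_toForm hk g).symm
  -- step 1 : the twisted Sylvester determinant
  have hdetB : B.det = l ^ 2 * A.det := by
    rw [hB, Matrix.det_fin_two_of, Matrix.det_fin_two]
    ring
  have step1 : sylRes d d p q = (l ^ 2 * A.det) ^ d * (RowM d F' G').det := by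
    rw [← det_SylT, SylT_eq_RowM hd1 hP0h hP1h hp hq, ← twist d B F' G', Matrix.det_mul,
      Matrix.det_kronecker, hdetB, Matrix.det_one, Fintype.card_fin, Fintype.card_fin,
      one_pow, mul_one]
  -- step 2 : master identity determinants
  have hmast := master hd1 A hFfh hGgh
  have hdmast := congrArg Matrix.det hmast
  rw [Matrix.det_mul, Matrix.det_mul, Matrix.det_submatrix_equiv_self,
    Matrix.det_kronecker, Matrix.det_submatrix_equiv_self, det_MM _ _ hA, det_MM _ _ hA,
    Matrix.det_one, Fintype.card_fin, Fintype.card_fin, one_pow, one_mul] at hdmast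
  -- hdmast : (RowM d Ff Gg).det * A.det ^ Ee (2d-1) = (A.det ^ Ee (d-1)) ^ 2 * (RowM d F' G').det
  have hbase : (RowM d Ff Gg).det = sylRes d d f g := by
    rw [← SylT_eq_RowM hd1 hFfh hGgh hf' hg', det_SylT]
  have hEe : A.det ^ Ee (2 * d - 1) = (A.det ^ Ee (d - 1)) ^ 2 * A.det ^ (d ^ 2) := by
    rw [Ee_split hd, pow_add, ← pow_mul, mul_comm (Ee (d - 1)) 2]
  have hcancel : (RowM d F' G').det = A.det ^ (d ^ 2) * sylRes d d f g := by
    have hne : (A.det ^ Ee (d - 1)) ^ 2 ≠ 0 := pow_ne_zero 2 (pow_ne_zero _ hA)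
    apply mul_left_cancel₀ hne
    rw [← hdmast, hbase, hEe]
    ring
  rw [step1, hcancel, mul_pow, ← pow_mul, pow_add]
  ring


end
end

section
/- Let R be a principal ideal domain with field of fractions K. Then GL₂(K) = Aff₂(K)·SL₂(R), i.e., every B ∈ GL₂(K) can be written as B = T·C with T ∈ GL₂(K) upper triangular and C ∈ SL₂(R). -/
/-- If `R` is a PID with fraction field `K`, then
`GL₂(K) = Aff₂(K)·SL₂(R)`: every `B ∈ GL₂(K)` factors as `B = T·C` with `T` an invertible
upper-triangular matrix over `K` and `C` the image of a matrix over `R` of determinant `1`. -/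
theorem statement1 {R K : Type*} [CommRing R] [IsDomain R] [IsPrincipalIdealRing R]
    [Field K] [Algebra R K] [IsFractionRing R K]
    (B : Matrix (Fin 2) (Fin 2) K) (hB : B.det ≠ 0) :
    ∃ (T : Matrix (Fin 2) (Fin 2) K) (C : Matrix (Fin 2) (Fin 2) R),
      T.det ≠ 0 ∧ T 1 0 = 0 ∧ C.det = 1 ∧ B = T * C.map (algebraMap R K) := by
  by_cases h0 : B 1 0 = 0
  · exact ⟨B, 1, hB, h0, Matrix.det_one, by simp⟩
  · -- write B 1 1 / B 1 0 = x / y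
    obtain ⟨x, y, hy, hxy⟩ := IsFractionRing.div_surjective (A := R) (B 1 1 / B 1 0)
    have hy0 : (y : R) ≠ 0 := nonZeroDivisors.ne_zero hy
    -- principal generator of span {x, y}
    obtain ⟨g, hg⟩ := (IsPrincipalIdealRing.principal (Ideal.span ({x, y} : Set R)))
    rw [Ideal.submodule_span_eq] at hg
    have hxmem : x ∈ Ideal.span ({g} : Set R) := by
      rw [← hg]; exact Ideal.subset_span (by simp)
    have hymem : y ∈ Ideal.span ({g} : Set R) := by
      rw [← hg]; exact Ideal.subset_span (by simp)
    obtain ⟨d, hd⟩ := Ideal.mem_span_singleton'.mp hxmem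
    obtain ⟨c, hc⟩ := Ideal.mem_span_singleton'.mp hymem
    have hgmem : g ∈ Ideal.span ({x, y} : Set R) := by
      rw [hg]; exact Ideal.subset_span (by simp)
    obtain ⟨a, b, hab⟩ := Ideal.mem_span_pair.mp hgmem
    have hg0 : g ≠ 0 := by
      rintro rfl; simp at hc; exact hy0 hc.symm
    have hexp : a * x + b * y = g * (a * d + b * c) := by
      rw [← hd, ← hc]; ring
    have hbez : a * d + b * c = 1 :=
      mul_left_cancel₀ hg0 (by rw [mul_one, ← hexp]; exact hab)
    set f := algebraMap R K with hf
    have hinj : Function.Injective f := IsFractionRing.injective R K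
    have hfy : f y ≠ 0 := fun h => hy0 (hinj (by simpa using h))
    have hfg : f g ≠ 0 := fun h => hg0 (hinj (by simpa using h))
    -- key relation
    have hkey : B 1 1 * f y = B 1 0 * f x := by
      field_simp at hxy
      linear_combination -hxy
    have hkey2 : B 1 1 * f c = B 1 0 * f d := by
      apply mul_right_cancel₀ hfg
      rw [mul_assoc, mul_assoc, ← map_mul, ← map_mul, hc, hd]
      exact hkey
    have h1 : f a * f d + f b * f c = 1 := by
      rw [← map_mul, ← map_mul, ← map_add, hbez, map_one]
    refine ⟨B * !![f d, f b; -(f c), f a], !![a, -b; c, d], ?_, ?_, ?_, ?_⟩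
    · rw [Matrix.det_mul, Matrix.det_fin_two_of]
      have hdet1 : f d * f a - f b * -(f c) = 1 := by rw [← h1]; ring
      rw [hdet1, mul_one]; exact hB
    · have he : (B * !![f d, f b; -(f c), f a]) 1 0
          = B 1 0 * f d + B 1 1 * -(f c) := by
        simp [Matrix.mul_apply, Fin.sum_univ_two]
      rw [he, ← hkey2]; ring
    · rw [Matrix.det_fin_two_of, ← hbez]; ring
    · have hmap : (!![a, -b; c, d] : Matrix (Fin 2) (Fin 2) R).map f
          = !![f a, -(f b); f c, f d] := by
        ext i j; fin_cases i <;> fin_cases j <;> simp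
      rw [hmap, Matrix.mul_assoc]
      have hone : (!![f d, f b; -(f c), f a] : Matrix (Fin 2) (Fin 2) K)
          * !![f a, -(f b); f c, f d] = 1 := by
        ext i j
        fin_cases i <;> fin_cases j <;>
          simp [Matrix.mul_apply, Fin.sum_univ_two, Matrix.one_apply] <;>
          first | (rw [← h1]; ring) | ring
      rw [hone, Matrix.mul_one]
end

section
/- Let R be a principal ideal domain with field of fractions K. Then GL₂(K) = SL₂(R)·Aff₂(K), i.e., every B ∈ GL₂(K) can be written as B = C·T with C ∈ SL₂(R) and T ∈ GL₂(K) upper triangular. -/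
/-- If `R` is a PID with fraction field `K`, then
`GL₂(K) = SL₂(R)·Aff₂(K)`: every `B ∈ GL₂(K)` factors as `B = C·T` with `C` the image of a
matrix over `R` of determinant `1` and `T` an invertible upper-triangular matrix over `K`. -/
theorem statement2 {R K : Type*} [CommRing R] [IsDomain R] [IsPrincipalIdealRing R]
    [Field K] [Algebra R K] [IsFractionRing R K]
    (B : Matrix (Fin 2) (Fin 2) K) (hB : B.det ≠ 0) :
    ∃ (C : Matrix (Fin 2) (Fin 2) R) (T : Matrix (Fin 2) (Fin 2) K),
      C.det = 1 ∧ T.det ≠ 0 ∧ T 1 0 = 0 ∧ B = C.map (algebraMap R K) * T := by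
  set f := algebraMap R K with hf
  -- common denominator for the first column
  obtain ⟨a₁, d₁, hd₁, ha₁⟩ := IsFractionRing.div_surjective (A := R) (B 0 0)
  obtain ⟨b₁, d₂, hd₂, hb₁⟩ := IsFractionRing.div_surjective (A := R) (B 1 0)
  have hd₁0 : f d₁ ≠ 0 := IsFractionRing.to_map_ne_zero_of_mem_nonZeroDivisors hd₁
  have hd₂0 : f d₂ ≠ 0 := IsFractionRing.to_map_ne_zero_of_mem_nonZeroDivisors hd₂
  set a := a₁ * d₂ with ha
  set b := b₁ * d₁ with hb
  have hB00 : B 0 0 = f a / (f d₁ * f d₂) := by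
    rw [ha, map_mul, ← ha₁]; field_simp; exact mul_div_cancel_right₀ _ hd₁0
  have hB10 : B 1 0 = f b / (f d₁ * f d₂) := by
    rw [hb, map_mul, ← hb₁]; field_simp; exact mul_div_cancel_right₀ _ hd₂0
  have hd0 : f d₁ * f d₂ ≠ 0 := mul_ne_zero hd₁0 hd₂0
  -- a, b not both zero
  have hab : a ≠ 0 ∨ b ≠ 0 := by
    by_contra h
    push_neg at h
    apply hB
    rw [Matrix.det_fin_two, hB00, hB10, h.1, h.2, map_zero]
    simp
  -- gcd
  obtain ⟨a', ha'⟩ := IsBezout.gcd_dvd_left a b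
  obtain ⟨b', hb'⟩ := IsBezout.gcd_dvd_right a b
  obtain ⟨x, y, hxy⟩ := IsBezout.gcd_eq_sum a b
  have hg0 : IsBezout.gcd a b ≠ 0 := by
    intro h0
    rcases hab with h | h
    · exact h (by rw [ha', h0, zero_mul])
    · exact h (by rw [hb', h0, zero_mul])
  have hcop : a' * x + b' * y = 1 := by
    have h2 : IsBezout.gcd a b * (a' * x + b' * y) = IsBezout.gcd a b * 1 := by
      linear_combination hxy - x * ha' - y * hb'
    exact mul_left_cancel₀ hg0 h2
  have key : -b' * a + a' * b = 0 := by
    linear_combination (-b') * ha' + a' * hb'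
  have e10 : (!![x, y; -b', a'] : Matrix (Fin 2) (Fin 2) R) 1 0 = -b' := rfl
  have e11 : (!![x, y; -b', a'] : Matrix (Fin 2) (Fin 2) R) 1 1 = a' := rfl
  refine ⟨!![a', -y; b', x], (!![x, y; -b', a'].map f) * B, ?_, ?_, ?_, ?_⟩
  · rw [Matrix.det_fin_two_of]
    linear_combination hcop
  · rw [Matrix.det_mul]
    have hdet : (!![x, y; -b', a'].map ⇑f).det = 1 := by
      rw [Matrix.det_fin_two]
      show f x * f a' - f y * f (-b') = 1
      rw [← map_mul, ← map_mul, ← map_sub]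
      have : x * a' - y * -b' = 1 := by linear_combination hcop
      rw [this, map_one]
    rw [hdet, one_mul]
    exact hB
  · rw [Matrix.mul_apply, Fin.sum_univ_two, Matrix.map_apply, Matrix.map_apply, e10, e11,
      hB00, hB10, ← mul_div_assoc, ← mul_div_assoc, ← add_div, ← map_mul, ← map_mul,
      ← map_add, key, map_zero, zero_div]
  · have hCD : !![a', -y; b', x] * !![x, y; -b', a'] = (1 : Matrix (Fin 2) (Fin 2) R) := by
      rw [Matrix.mul_fin_two, Matrix.one_fin_two]
      have h00 : a' * x + -y * -b' = 1 := by linear_combination hcop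
      have h01 : a' * y + -y * a' = 0 := by ring
      have h10 : b' * x + x * -b' = 0 := by ring
      have h11 : b' * y + x * a' = 1 := by linear_combination hcop
      rw [h00, h01, h10, h11]
    calc B = 1 * B := (one_mul B).symm
      _ = ((!![a', -y; b', x] * !![x, y; -b', a']).map f) * B := by
          rw [hCD, Matrix.map_one f (map_zero f) (map_one f)]
      _ = !![a', -y; b', x].map f * (!![x, y; -b', a'].map f * B) := by
          rw [Matrix.map_mul, Matrix.mul_assoc]
end

section
/- Let R be a Dedekind domain with field of fractions K and let φ = F/G be a rational map of degree d ≥ 2 over K given by a model [F,G]. Then Res_R([φ]) = Res_R([φ]₁) as ideals of R; in particular, a model [F,G] over R is R-affine minimal if and only if it is R-minimal. -/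
noncomputable section

namespace BM
open MvPolynomial Finset

variable {K : Type*} [CommRing K]

/-- exponent pair -/
def e (a b : ℕ) : Fin 2 →₀ ℕ := Finsupp.single 0 a + Finsupp.single 1 b

@[simp] lemma e_apply0 (a b : ℕ) : e a b 0 = a := by
  simp [e, Finsupp.single_apply]

@[simp] lemma e_apply1 (a b : ℕ) : e a b 1 = b := by
  simp [e, Finsupp.single_apply]

lemma e_inj {a b a' b' : ℕ} : e a b = e a' b' ↔ a = a' ∧ b = b' := by
  constructor
  · intro h
    refine ⟨?_, ?_⟩
    · have := congrArg (fun m => m 0) h; simpa using this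
    · have := congrArg (fun m => m 1) h; simpa using this
  · rintro ⟨rfl, rfl⟩; rfl

lemma eq_e_self (m : Fin 2 →₀ ℕ) : m = e (m 0) (m 1) := by
  ext x
  fin_cases x <;> simp [e, Finsupp.single_apply]

lemma degree_e (a b : ℕ) : (e a b).degree = a + b := by
  rw [Finsupp.degree_apply, Finset.sum_subset (Finset.subset_univ _)]
  · rw [Fin.sum_univ_two, e_apply0, e_apply1]
  · intro i _ h
    simpa using Finsupp.notMem_support_iff.mp h

lemma e_add (a b a' b' : ℕ) : e a b + e a' b' = e (a + a') (b + b') := by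
  simp only [e, Finsupp.single_add]
  abel

lemma coeffVec_apply (d : ℕ) (P : MvPolynomial (Fin 2) K) (i : ℕ) :
    coeffVec d P i = MvPolynomial.coeff (e i (d - i)) P := rfl

lemma monomial_e (a b : ℕ) (c : K) :
    (monomial (e a b) c : MvPolynomial (Fin 2) K) = C c * X 0 ^ a * X 1 ^ b := by
  rw [monomial_eq, Finsupp.prod_fintype _ _ (fun i => pow_zero _), Fin.prod_univ_two,
    e_apply0, e_apply1, mul_assoc]

lemma toForm_eq_sum (d : ℕ) (f : ℕ → K) :
    toForm d f = ∑ i ∈ range (d + 1), monomial (e i (d - i)) (f i) := by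
  simp [toForm, monomial_e]

lemma toForm_isHomogeneous (d : ℕ) (f : ℕ → K) : (toForm d f).IsHomogeneous d := by
  rw [toForm_eq_sum]
  apply IsHomogeneous.sum
  intro i hi
  have := mem_range.mp hi
  exact isHomogeneous_monomial _ (by rw [degree_e]; omega)

lemma coeffVec_toForm (d : ℕ) (f : ℕ → K) {i : ℕ} (hi : i ≤ d) :
    coeffVec d (toForm d f) i = f i := by
  rw [coeffVec_apply, toForm_eq_sum, coeff_sum]
  rw [Finset.sum_eq_single i]
  · simp [coeff_monomial]
  · intro k _ hk
    rw [coeff_monomial, if_neg]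
    intro h
    exact hk (e_inj.mp h).1
  · intro h
    exact absurd (mem_range.mpr (by omega)) h

lemma coeffVec_eq_zero {n : ℕ} {P : MvPolynomial (Fin 2) K}
    (hP : P.IsHomogeneous n) {i : ℕ} (hi : n < i) : coeffVec n P i = 0 := by
  rw [coeffVec_apply]
  exact hP.coeff_eq_zero (by rw [degree_e]; omega)

/-- reconstruction -/
lemma toForm_coeffVec {n : ℕ} {P : MvPolynomial (Fin 2) K}
    (hP : P.IsHomogeneous n) : toForm n (coeffVec n P) = P := by
  rw [toForm_eq_sum]
  apply MvPolynomial.ext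
  intro m
  rw [coeff_sum]
  by_cases hm : m.degree = n
  · have hme : m = e (m 0) (m 1) := eq_e_self m
    have hsum : m 0 + m 1 = n := by rw [hme, degree_e] at hm; exact hm
    have hb : n - m 0 = m 1 := by omega
    rw [Finset.sum_eq_single (m 0)]
    · rw [coeff_monomial, hb, ← hme, if_pos rfl, coeffVec_apply, hb, ← hme]
    · intro k _ hk
      rw [coeff_monomial, if_neg]
      intro h
      apply hk
      have := congrArg (fun mm => mm 0) h
      simpa using this
    · intro h
      exact absurd (mem_range.mpr (by omega)) h
  · have h1 : MvPolynomial.coeff m P = 0 := hP.coeff_eq_zero hm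
    rw [h1, Finset.sum_eq_zero]
    intro k hk
    rw [coeff_monomial, if_neg]
    intro h
    apply hm
    rw [← h, degree_e]
    have := mem_range.mp hk
    omega

end BM


namespace BM
open MvPolynomial Finset

variable {K : Type*} [CommRing K]

/-- substMat as a ring hom -/
def substHom (A : Matrix (Fin 2) (Fin 2) K) :
    MvPolynomial (Fin 2) K →+* MvPolynomial (Fin 2) K :=
  eval₂Hom C (fun k => C (A k 0) * X 0 + C (A k 1) * X 1)

lemma substMat_eq (A : Matrix (Fin 2) (Fin 2) K) (P : MvPolynomial (Fin 2) K) :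
    substMat A P = substHom A P := rfl

@[simp] lemma substHom_C (A : Matrix (Fin 2) (Fin 2) K) (c : K) :
    substHom A (C c) = C c := by simp [substHom]

@[simp] lemma substHom_X (A : Matrix (Fin 2) (Fin 2) K) (k : Fin 2) :
    substHom A (X k) = C (A k 0) * X 0 + C (A k 1) * X 1 := by simp [substHom]

lemma substMat_isHomogeneous {n : ℕ} {P : MvPolynomial (Fin 2) K}
    (hP : P.IsHomogeneous n) (A : Matrix (Fin 2) (Fin 2) K) :
    (substMat A P).IsHomogeneous n := by
  have := hP.eval₂ (C : K →+* MvPolynomial (Fin 2) K)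
    (fun k => C (A k 0) * X 0 + C (A k 1) * X 1)
    (fun r => isHomogeneous_C _ _)
    (fun k => (isHomogeneous_C_mul_X _ _).add (isHomogeneous_C_mul_X _ _))
  simpa [substMat] using this

lemma substMat_comp (A B : Matrix (Fin 2) (Fin 2) K) (P : MvPolynomial (Fin 2) K) :
    substMat B (substMat A P) = substMat (A * B) P := by
  simp only [substMat_eq]
  induction P using MvPolynomial.induction_on with
  | C a => simp
  | add p q hp hq => simp [map_add, hp, hq]
  | mul_X p k hp =>
    simp only [map_mul, hp, substHom_X]
    congr 1
    simp only [map_add, map_mul, substHom_C, substHom_X, Matrix.mul_apply,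
      Fin.sum_univ_two]
    ring

lemma substMat_add (A : Matrix (Fin 2) (Fin 2) K) (P Q : MvPolynomial (Fin 2) K) :
    substMat A (P + Q) = substMat A P + substMat A Q := by
  simp [substMat_eq]

lemma substMat_sub (A : Matrix (Fin 2) (Fin 2) K) (P Q : MvPolynomial (Fin 2) K) :
    substMat A (P - Q) = substMat A P - substMat A Q := by
  simp [substMat_eq]

lemma substMat_neg (A : Matrix (Fin 2) (Fin 2) K) (P : MvPolynomial (Fin 2) K) :
    substMat A (-P) = -substMat A P := by
  simp [substMat_eq]

lemma substMat_mul (A : Matrix (Fin 2) (Fin 2) K) (P Q : MvPolynomial (Fin 2) K) :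
    substMat A (P * Q) = substMat A P * substMat A Q := by
  simp [substMat_eq]

lemma substMat_C (A : Matrix (Fin 2) (Fin 2) K) (c : K) :
    substMat A (C c) = C c := by
  simp [substMat_eq]

lemma toForm_FA (d : ℕ) (f g : ℕ → K) (A : Matrix (Fin 2) (Fin 2) K) :
    toForm d (FA d f g A) =
      C (A 1 1) * substMat A (toForm d f) - C (A 0 1) * substMat A (toForm d g) := by
  apply toForm_coeffVec
  exact (((substMat_isHomogeneous (toForm_isHomogeneous d f) A).C_mul _).sub
    ((substMat_isHomogeneous (toForm_isHomogeneous d g) A).C_mul _))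

lemma toForm_GA (d : ℕ) (f g : ℕ → K) (A : Matrix (Fin 2) (Fin 2) K) :
    toForm d (GA d f g A) =
      -(C (A 1 0)) * substMat A (toForm d f) + C (A 0 0) * substMat A (toForm d g) := by
  apply toForm_coeffVec
  have h1 := (substMat_isHomogeneous (toForm_isHomogeneous d f) A).C_mul (-(A 1 0))
  rw [map_neg, neg_mul] at h1
  rw [neg_mul]
  exact ((substMat_isHomogeneous (toForm_isHomogeneous d f) A).C_mul (A 1 0)).neg.add
    ((substMat_isHomogeneous (toForm_isHomogeneous d g) A).C_mul _)

lemma FA_isHomogeneous_arg (d : ℕ) (f g : ℕ → K) (A : Matrix (Fin 2) (Fin 2) K) :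
    (C (A 1 1) * substMat A (toForm d f) - C (A 0 1) * substMat A (toForm d g)).IsHomogeneous d :=
  (((substMat_isHomogeneous (toForm_isHomogeneous d f) A).C_mul _).sub
    ((substMat_isHomogeneous (toForm_isHomogeneous d g) A).C_mul _))

lemma GA_isHomogeneous_arg (d : ℕ) (f g : ℕ → K) (A : Matrix (Fin 2) (Fin 2) K) :
    (-(C (A 1 0)) * substMat A (toForm d f) + C (A 0 0) * substMat A (toForm d g)).IsHomogeneous d := by
  rw [neg_mul]
  exact ((substMat_isHomogeneous (toForm_isHomogeneous d f) A).C_mul (A 1 0)).neg.add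
    ((substMat_isHomogeneous (toForm_isHomogeneous d g) A).C_mul _)

lemma FA_eq_zero_of_gt (d : ℕ) (f g : ℕ → K) (A : Matrix (Fin 2) (Fin 2) K)
    {i : ℕ} (hi : d < i) : FA d f g A i = 0 :=
  coeffVec_eq_zero (FA_isHomogeneous_arg d f g A) hi

lemma GA_eq_zero_of_gt (d : ℕ) (f g : ℕ → K) (A : Matrix (Fin 2) (Fin 2) K)
    {i : ℕ} (hi : d < i) : GA d f g A i = 0 :=
  coeffVec_eq_zero (GA_isHomogeneous_arg d f g A) hi

lemma FA_comp (d : ℕ) (f g : ℕ → K) (A B : Matrix (Fin 2) (Fin 2) K) :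
    FA d f g (A * B) = FA d (FA d f g A) (GA d f g A) B := by
  show coeffVec d _ = coeffVec d _
  refine congrArg (coeffVec d) ?_
  rw [toForm_FA, toForm_GA]
  simp only [substMat_sub, substMat_add, substMat_mul, substMat_neg, substMat_C, substMat_comp]
  simp only [Matrix.mul_apply, Fin.sum_univ_two, C_add, C_mul]
  ring

lemma GA_comp (d : ℕ) (f g : ℕ → K) (A B : Matrix (Fin 2) (Fin 2) K) :
    GA d f g (A * B) = GA d (FA d f g A) (GA d f g A) B := by
  show coeffVec d _ = coeffVec d _
  refine congrArg (coeffVec d) ?_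
  rw [toForm_FA, toForm_GA]
  simp only [substMat_sub, substMat_add, substMat_mul, substMat_neg, substMat_C, substMat_comp]
  simp only [Matrix.mul_apply, Fin.sum_univ_two, C_add, C_mul]
  ring

lemma toForm_smul (d : ℕ) (u : K) (f : ℕ → K) :
    toForm d (fun i => u * f i) = C u * toForm d f := by
  rw [toForm_eq_sum, toForm_eq_sum, Finset.mul_sum]
  apply Finset.sum_congr rfl
  intro i _
  rw [monomial_e, monomial_e, C_mul]
  ring

lemma FA_smul (d : ℕ) (u : K) (f g : ℕ → K) (A : Matrix (Fin 2) (Fin 2) K) :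
    FA d (fun i => u * f i) (fun i => u * g i) A = fun i => u * FA d f g A i := by
  funext i
  show coeffVec d _ i = u * coeffVec d _ i
  rw [coeffVec_apply, coeffVec_apply, ← coeff_C_mul]
  congr 1
  simp only [toForm_smul, substMat_mul, substMat_C]
  ring

lemma GA_smul (d : ℕ) (u : K) (f g : ℕ → K) (A : Matrix (Fin 2) (Fin 2) K) :
    GA d (fun i => u * f i) (fun i => u * g i) A = fun i => u * GA d f g A i := by
  funext i
  show coeffVec d _ i = u * coeffVec d _ i
  rw [coeffVec_apply, coeffVec_apply, ← coeff_C_mul]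
  congr 1
  simp only [toForm_smul, substMat_mul, substMat_C]
  ring

end BM


namespace BM
open MvPolynomial Finset

variable {K : Type*} [CommRing K]

/-- polynomials with all coefficients in a subring -/
def coeffSubring (O : Subring K) : Subring (MvPolynomial (Fin 2) K) where
  carrier := {P | ∀ m, coeff m P ∈ O}
  zero_mem' := by
    intro m
    rw [coeff_zero]
    exact O.zero_mem
  one_mem' := by
    intro m
    rw [coeff_one]
    split
    · exact O.one_mem
    · exact O.zero_mem
  add_mem' := by
    intro P Q hP hQ m
    rw [coeff_add]
    exact add_mem (hP m) (hQ m)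
  neg_mem' := by
    intro P hP m
    rw [coeff_neg]
    exact neg_mem (hP m)
  mul_mem' := by
    intro P Q hP hQ m
    rw [coeff_mul]
    exact sum_mem (fun x _ => O.mul_mem (hP _) (hQ _))

lemma C_mem_coeffSubring {O : Subring K} {c : K} (hc : c ∈ O) :
    C c ∈ coeffSubring O := by
  intro m
  rw [coeff_C]
  split
  · exact hc
  · exact O.zero_mem

lemma X_mem_coeffSubring {O : Subring K} (k : Fin 2) :
    (X k : MvPolynomial (Fin 2) K) ∈ coeffSubring O := by
  intro m
  rw [coeff_X']
  split
  · exact O.one_mem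
  · exact O.zero_mem

lemma monomial_mem_coeffSubring {O : Subring K} {c : K} (hc : c ∈ O) (s : Fin 2 →₀ ℕ) :
    (monomial s c : MvPolynomial (Fin 2) K) ∈ coeffSubring O := by
  intro m
  rw [coeff_monomial]
  split
  · exact hc
  · exact O.zero_mem

lemma toForm_mem_coeffSubring {O : Subring K} {d : ℕ} {f : ℕ → K}
    (hf : ∀ i, f i ∈ O) : toForm d f ∈ coeffSubring O := by
  rw [toForm_eq_sum]
  exact sum_mem (fun i _ => monomial_mem_coeffSubring (hf i) _)

lemma substMat_mem_coeffSubring {O : Subring K} {P : MvPolynomial (Fin 2) K}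
    (hP : P ∈ coeffSubring O) {A : Matrix (Fin 2) (Fin 2) K}
    (hA : ∀ k l, A k l ∈ O) : substMat A P ∈ coeffSubring O := by
  rw [substMat_eq, ← support_sum_monomial_coeff P, map_sum]
  apply sum_mem
  intro m _
  rw [substHom, eval₂Hom_monomial]
  apply mul_mem (C_mem_coeffSubring (hP m))
  rw [Finsupp.prod_fintype _ _ (fun i => pow_zero _), Fin.prod_univ_two]
  apply mul_mem <;>
    exact pow_mem (add_mem (mul_mem (C_mem_coeffSubring (hA _ _)) (X_mem_coeffSubring _))
      (mul_mem (C_mem_coeffSubring (hA _ _)) (X_mem_coeffSubring _))) _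

lemma FA_mem_subring {O : Subring K} {d : ℕ} {f g : ℕ → K}
    (hf : ∀ i, f i ∈ O) (hg : ∀ i, g i ∈ O) {A : Matrix (Fin 2) (Fin 2) K}
    (hA : ∀ k l, A k l ∈ O) (i : ℕ) : FA d f g A i ∈ O := by
  have h : (C (A 1 1) * substMat A (toForm d f) -
      C (A 0 1) * substMat A (toForm d g)) ∈ coeffSubring O :=
    sub_mem (mul_mem (C_mem_coeffSubring (hA 1 1))
        (substMat_mem_coeffSubring (toForm_mem_coeffSubring hf) hA))
      (mul_mem (C_mem_coeffSubring (hA 0 1))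
        (substMat_mem_coeffSubring (toForm_mem_coeffSubring hg) hA))
  exact h _

lemma GA_mem_subring {O : Subring K} {d : ℕ} {f g : ℕ → K}
    (hf : ∀ i, f i ∈ O) (hg : ∀ i, g i ∈ O) {A : Matrix (Fin 2) (Fin 2) K}
    (hA : ∀ k l, A k l ∈ O) (i : ℕ) : GA d f g A i ∈ O := by
  have h : (-(C (A 1 0)) * substMat A (toForm d f) +
      C (A 0 0) * substMat A (toForm d g)) ∈ coeffSubring O :=
    add_mem (mul_mem (neg_mem (C_mem_coeffSubring (hA 1 0)))
        (substMat_mem_coeffSubring (toForm_mem_coeffSubring hf) hA))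
      (mul_mem (C_mem_coeffSubring (hA 0 0))
        (substMat_mem_coeffSubring (toForm_mem_coeffSubring hg) hA))
  exact h _

end BM

namespace BM
open Finset

variable {K : Type*} [CommRing K]

/-- the Sylvester matrix (square case) -/
def Smat (d : ℕ) (p q : ℕ → K) : Matrix (Fin (d + d)) (Fin (d + d)) K :=
  Matrix.of fun i j : Fin (d + d) =>
    if (i : ℕ) < d then
      (if (i : ℕ) ≤ (j : ℕ) ∧ (j : ℕ) ≤ (i : ℕ) + d then p (d - ((j : ℕ) - (i : ℕ))) else 0)
    else
      (if (i : ℕ) - d ≤ (j : ℕ) ∧ (j : ℕ) ≤ ((i : ℕ) - d) + d then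
        q (d - ((j : ℕ) - ((i : ℕ) - d))) else 0)

lemma sylRes_eq_det (d : ℕ) (p q : ℕ → K) : sylRes d d p q = (Smat d p q).det := rfl

lemma Smat_apply (d : ℕ) (p q : ℕ → K) (i j : Fin (d + d)) :
    Smat d p q i j =
    if (i : ℕ) < d then
      (if (i : ℕ) ≤ (j : ℕ) ∧ (j : ℕ) ≤ (i : ℕ) + d then p (d - ((j : ℕ) - (i : ℕ))) else 0)
    else
      (if (i : ℕ) - d ≤ (j : ℕ) ∧ (j : ℕ) ≤ ((i : ℕ) - d) + d then
        q (d - ((j : ℕ) - ((i : ℕ) - d))) else 0) := rfl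

lemma sylRes_congr (d : ℕ) {p q p' q' : ℕ → K}
    (hp : ∀ i ≤ d, p i = p' i) (hq : ∀ i ≤ d, q i = q' i) :
    sylRes d d p q = sylRes d d p' q' := by
  rw [sylRes_eq_det, sylRes_eq_det]
  congr 1
  ext i j
  rw [Smat_apply, Smat_apply]
  split
  · split
    · exact hp _ (by omega)
    · rfl
  · split
    · exact hq _ (by omega)
    · rfl

lemma sylRes_smul (d : ℕ) (u : K) (p q : ℕ → K) :
    sylRes d d (fun i => u * p i) (fun i => u * q i) = u ^ (d + d) * sylRes d d p q := by
  rw [sylRes_eq_det, sylRes_eq_det]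
  have h : Smat d (fun i => u * p i) (fun i => u * q i) = u • Smat d p q := by
    ext i j
    rw [Smat_apply, Matrix.smul_apply, Smat_apply, smul_eq_mul]
    split <;> split <;> simp [mul_ite]
  rw [h, Matrix.det_smul, Fintype.card_fin]

/-- adding a multiple of the top block to the bottom block -/
lemma sylRes_rowop (d : ℕ) (hd : 0 < d) (c : K) (p q : ℕ → K) :
    sylRes d d p (fun i => c * p i + q i) = sylRes d d p q := by
  classical
  rw [sylRes_eq_det, sylRes_eq_det]
  set L : Matrix (Fin (d + d)) (Fin (d + d)) K :=
    Matrix.of (fun i j : Fin (d + d) =>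
      if i = j then 1 else if (j : ℕ) + d = (i : ℕ) then c else 0) with hL
  have hprod : Smat d p (fun i => c * p i + q i) = L * Smat d p q := by
    ext i j
    rw [Matrix.mul_apply]
    have hsummand : ∀ k : Fin (d + d),
        L i k * Smat d p q k j =
          (if i = k then Smat d p q i j else 0) +
          (if (k : ℕ) + d = (i : ℕ) then c * Smat d p q k j else 0) := by
      intro k
      rw [hL]
      simp only [Matrix.of_apply]
      by_cases h1 : i = k
      · subst h1
        rw [if_pos rfl, if_pos rfl, if_neg (show ¬((i : ℕ) + d = (i : ℕ)) by omega)]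
        ring
      · rw [if_neg h1, if_neg h1]
        by_cases h2 : (k : ℕ) + d = (i : ℕ)
        · rw [if_pos h2, if_pos h2, zero_add]
        · rw [if_neg h2, if_neg h2, zero_mul, add_zero]
    rw [Finset.sum_congr rfl (fun k _ => hsummand k), Finset.sum_add_distrib]
    rw [Finset.sum_ite_eq Finset.univ i (fun _ => Smat d p q i j)]
    rw [if_pos (Finset.mem_univ i)]
    by_cases hi : d ≤ (i : ℕ)
    · have hk0 : ((i : ℕ) - d) < d + d := by omega
      rw [Finset.sum_eq_single (⟨(i : ℕ) - d, hk0⟩ : Fin (d + d))]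
      · rw [if_pos (show ((⟨(i : ℕ) - d, hk0⟩ : Fin (d + d)) : ℕ) + d = (i : ℕ) from by
          show (i : ℕ) - d + d = (i : ℕ); omega)]
        rw [Smat_apply, Smat_apply, Smat_apply]
        rw [if_neg (by omega : ¬ (i : ℕ) < d), if_neg (by omega : ¬ (i : ℕ) < d)]
        rw [if_pos (show ((⟨(i : ℕ) - d, hk0⟩ : Fin (d + d)) : ℕ) < d from by
          show (i : ℕ) - d < d; omega)]
        show (if (i : ℕ) - d ≤ (j : ℕ) ∧ (j : ℕ) ≤ (i : ℕ) - d + d then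
            c * p (d - ((j : ℕ) - ((i : ℕ) - d))) + q (d - ((j : ℕ) - ((i : ℕ) - d))) else 0) = _
        split_ifs with hcond
        · ring
        · ring
      · intro k _ hk
        rw [if_neg]
        intro h
        apply hk
        apply Fin.ext
        show (k : ℕ) = (i : ℕ) - d
        omega
      · intro h
        exact absurd (Finset.mem_univ _) h
    · rw [Finset.sum_eq_zero]
      · rw [Smat_apply, Smat_apply]
        rw [if_pos (by omega : (i : ℕ) < d), if_pos (by omega : (i : ℕ) < d), add_zero]
      · intro k _
        have : ¬ ((k : ℕ) + d = (i : ℕ)) := by omega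
        rw [if_neg this]
  have hdetL : L.det = 1 := by
    have htri : L.BlockTriangular OrderDual.toDual := by
      intro i j hij
      have hij' : (i : ℕ) < (j : ℕ) := hij
      rw [hL]
      simp only [Matrix.of_apply]
      rw [if_neg (by intro h; subst h; omega), if_neg (by omega)]
    rw [Matrix.det_of_lowerTriangular L htri]
    apply Finset.prod_eq_one
    intro i _
    rw [hL]
    simp
  rw [hprod, Matrix.det_mul, hdetL, one_mul]

/-- swap invariance -/
lemma sylRes_swap (d : ℕ) (p q : ℕ → K) :
    sylRes d d (fun i => -q (d - i)) (fun i => -p (d - i)) = sylRes d d p q := by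
  rw [sylRes_eq_det, sylRes_eq_det]
  have h : Smat d (fun i => -q (d - i)) (fun i => -p (d - i)) =
      -((Smat d p q).submatrix Fin.revPerm Fin.revPerm) := by
    ext i j
    have hi2 : (i : ℕ) < d + d := i.isLt
    have hj2 : (j : ℕ) < d + d := j.isLt
    rw [Smat_apply, Matrix.neg_apply, Matrix.submatrix_apply]
    have hrev : ∀ k : Fin (d + d), ((Fin.revPerm k : Fin (d + d)) : ℕ) = d + d - 1 - (k : ℕ) := by
      intro k
      rw [Fin.revPerm_apply, Fin.val_rev]
      omega
    rw [Smat_apply, hrev, hrev]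
    split_ifs <;> first
      | (exfalso; omega)
      | (rw [neg_zero])
      | rfl
      | (congr 2; omega)
  rw [h]
  have h2 : -((Smat d p q).submatrix Fin.revPerm Fin.revPerm) =
      (-(Smat d p q)).submatrix Fin.revPerm Fin.revPerm := by
    ext i j
    simp
  rw [h2, Matrix.det_submatrix_equiv_self, Matrix.det_neg, Fintype.card_fin,
    Even.neg_one_pow ⟨d, rfl⟩, one_mul]

end BM

namespace BM
open MvPolynomial Finset

variable {K : Type*} [CommRing K]

section Shear

variable (c : K)

/-- the shear matrix -/
def Vsh (c : K) : Matrix (Fin 2) (Fin 2) K := !![1, 0; c, 1]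

@[simp] lemma Vsh00 : Vsh c 0 0 = 1 := rfl
@[simp] lemma Vsh01 : Vsh c 0 1 = 0 := rfl
@[simp] lemma Vsh10 : Vsh c 1 0 = c := rfl
@[simp] lemma Vsh11 : Vsh c 1 1 = 1 := rfl

lemma sigma_X0 : substHom (Vsh c) (X 0) = X 0 := by
  rw [substHom_X, Vsh00, Vsh01]
  simp

lemma sigma_X1 : substHom (Vsh c) (X 1) = C c * X 0 + X 1 := by
  rw [substHom_X, Vsh10, Vsh11]
  simp

lemma shear_pow (b : ℕ) : (C c * X 0 + X 1 : MvPolynomial (Fin 2) K) ^ b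
    = ∑ k ∈ range (b + 1), C (c ^ k * (b.choose k : K)) * X 0 ^ k * X 1 ^ (b - k) := by
  rw [add_pow]
  apply Finset.sum_congr rfl
  intro k _
  have hcast : ((b.choose k : ℕ) : MvPolynomial (Fin 2) K) = C ((b.choose k : ℕ) : K) :=
    (map_natCast (C : K →+* MvPolynomial (Fin 2) K) _).symm
  rw [mul_pow, ← map_pow (C : K →+* MvPolynomial (Fin 2) K), hcast, C_mul]
  ring

lemma sigma_monomial (a b : ℕ) (w : K) :
    substHom (Vsh c) (monomial (e a b) w) = C w * X 0 ^ a * (C c * X 0 + X 1) ^ b := by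
  rw [monomial_e, map_mul, map_mul, substHom_C, map_pow, map_pow, sigma_X0, sigma_X1]

lemma sigma_monomial_sum (a b : ℕ) (w : K) :
    substHom (Vsh c) (monomial (e a b) w) =
      ∑ k ∈ range (b + 1), monomial (e (a + k) (b - k)) (w * (c ^ k * (b.choose k : K))) := by
  rw [sigma_monomial, shear_pow, Finset.mul_sum]
  apply Finset.sum_congr rfl
  intro k _
  rw [monomial_e]
  simp only [C_mul]
  ring

/-- coefficient of σ(monomial) in the reversed basis -/
lemma coeff_sigma_monomial {n t : ℕ} (ht : t ≤ n) (j : ℕ) (w : K) :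
    coeff (e (n - j) j) (substHom (Vsh c) (monomial (e (n - t) t) w)) =
      if j ≤ t then w * c ^ (t - j) * ((t.choose j : ℕ) : K) else 0 := by
  rw [sigma_monomial_sum, coeff_sum]
  by_cases hj : j ≤ t
  · rw [if_pos hj]
    rw [Finset.sum_eq_single (t - j)]
    · rw [coeff_monomial, if_pos]
      · rw [Nat.choose_symm hj]
        ring
      · apply e_inj.mpr
        constructor <;> omega
    · intro k hk hkj
      rw [coeff_monomial, if_neg]
      intro h
      obtain ⟨h1, h2⟩ := e_inj.mp h
      have := mem_range.mp hk
      omega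
    · intro h
      exact absurd (mem_range.mpr (by omega)) h
  · rw [if_neg hj]
    apply Finset.sum_eq_zero
    intro k hk
    rw [coeff_monomial, if_neg]
    intro h
    obtain ⟨h1, h2⟩ := e_inj.mp h
    have := mem_range.mp hk
    omega

/-- reconstruction indexed by second exponent -/
lemma hom_eq_sum' {n : ℕ} {h : MvPolynomial (Fin 2) K} (hh : h.IsHomogeneous n) :
    h = ∑ j ∈ range (n + 1), monomial (e (n - j) j) (coeff (e (n - j) j) h) := by
  have h1 : h = ∑ i ∈ range (n + 1), monomial (e i (n - i)) (coeff (e i (n - i)) h) := by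
    conv_lhs => rw [← toForm_coeffVec hh]
    rw [toForm_eq_sum]
    apply Finset.sum_congr rfl
    intro i _
    rw [coeffVec_apply]
  conv_lhs => rw [h1]
  rw [← Finset.sum_range_reflect]
  apply Finset.sum_congr rfl
  intro j hj
  have hj' := mem_range.mp hj
  have h2 : n + 1 - 1 - j = n - j := by omega
  have h3 : n - (n - j) = j := by omega
  rw [h2, h3]

lemma coeff_sigma {n : ℕ} {h : MvPolynomial (Fin 2) K} (hh : h.IsHomogeneous n) (j : ℕ) :
    coeff (e (n - j) j) (substHom (Vsh c) h) =
      ∑ t ∈ range (n + 1), coeff (e (n - t) t) h *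
        (if j ≤ t then c ^ (t - j) * ((t.choose j : ℕ) : K) else 0) := by
  conv_lhs => rw [hom_eq_sum' hh]
  rw [map_sum, coeff_sum]
  apply Finset.sum_congr rfl
  intro t ht
  have ht' : t ≤ n := by have := mem_range.mp ht; omega
  rw [coeff_sigma_monomial c ht']
  split_ifs
  · ring
  · ring

end Shear

section Bridge

variable {d : ℕ} (c : K)

/-- row polynomials of the Sylvester matrix -/
def rowN (d : ℕ) (P Q : MvPolynomial (Fin 2) K) (i : ℕ) : MvPolynomial (Fin 2) K :=
  if i < d then X 0 ^ (d - 1 - i) * X 1 ^ i * P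
  else X 0 ^ (d - 1 - (i - d)) * X 1 ^ (i - d) * Q

/-- the Sylvester matrix as a matrix of coefficients of row polynomials -/
def BmatN (d : ℕ) (P Q : MvPolynomial (Fin 2) K) : Matrix (Fin (d + d)) (Fin (d + d)) K :=
  Matrix.of fun i j => coeff (e (d + d - 1 - (j : ℕ)) (j : ℕ)) (rowN d P Q (i : ℕ))

lemma rowN_isHomogeneous (hd : 0 < d) {P Q : MvPolynomial (Fin 2) K}
    (hP : P.IsHomogeneous d) (hQ : Q.IsHomogeneous d) {i : ℕ} (hi : i < d + d) :
    (rowN d P Q i).IsHomogeneous (d + d - 1) := by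
  rw [rowN]
  split_ifs with h
  · have h2 : d - 1 - i + i + d = d + d - 1 := by omega
    rw [← h2]
    exact ((isHomogeneous_X_pow 0 _).mul (isHomogeneous_X_pow 1 _)).mul hP
  · have h2 : d - 1 - (i - d) + (i - d) + d = d + d - 1 := by omega
    rw [← h2]
    exact ((isHomogeneous_X_pow 0 _).mul (isHomogeneous_X_pow 1 _)).mul hQ

lemma bridge_one (hd : 0 < d) (f : ℕ → K) {i' j : ℕ} (hi' : i' < d) (hj : j < d + d) :
    coeff (e (d + d - 1 - j) j) ((X 0 : MvPolynomial (Fin 2) K) ^ (d - 1 - i') * X 1 ^ i' * toForm d f) =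
      if i' ≤ j ∧ j ≤ i' + d then f (d - (j - i')) else 0 := by
  have hexp : (X 0 : MvPolynomial (Fin 2) K) ^ (d - 1 - i') * X 1 ^ i' * toForm d f =
      ∑ k ∈ range (d + 1), monomial (e ((d - 1 - i') + k) (i' + (d - k))) (f k) := by
    rw [toForm_eq_sum, Finset.mul_sum]
    apply Finset.sum_congr rfl
    intro k _
    have h1 : (X 0 : MvPolynomial (Fin 2) K) ^ (d - 1 - i') * X 1 ^ i' =
        monomial (e (d - 1 - i') i') 1 := by
      rw [monomial_e, C_1, one_mul]
    rw [h1, monomial_mul, e_add, one_mul]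
  rw [hexp, coeff_sum]
  by_cases hcond : i' ≤ j ∧ j ≤ i' + d
  · rw [if_pos hcond]
    rw [Finset.sum_eq_single (d - (j - i'))]
    · rw [coeff_monomial, if_pos]
      apply e_inj.mpr
      constructor <;> omega
    · intro k hk hkj
      rw [coeff_monomial, if_neg]
      intro h
      obtain ⟨h1, h2⟩ := e_inj.mp h
      have := mem_range.mp hk
      omega
    · intro h
      exact absurd (mem_range.mpr (by omega)) h
  · rw [if_neg hcond]
    apply Finset.sum_eq_zero
    intro k hk
    rw [coeff_monomial, if_neg]
    intro h
    obtain ⟨h1, h2⟩ := e_inj.mp h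
    have := mem_range.mp hk
    omega

lemma bridge (hd : 0 < d) {P Q : MvPolynomial (Fin 2) K}
    (hP : P.IsHomogeneous d) (hQ : Q.IsHomogeneous d) :
    Smat d (coeffVec d P) (coeffVec d Q) = BmatN d P Q := by
  ext i j
  have hi2 : (i : ℕ) < d + d := i.isLt
  have hj2 : (j : ℕ) < d + d := j.isLt
  rw [Smat_apply, BmatN, Matrix.of_apply, rowN]
  by_cases hi : (i : ℕ) < d
  · rw [if_pos hi, if_pos hi]
    conv_rhs => rw [← toForm_coeffVec hP]
    exact (bridge_one hd (coeffVec d P) hi hj2).symm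
  · rw [if_neg hi, if_neg hi]
    conv_rhs => rw [← toForm_coeffVec hQ]
    exact (bridge_one hd (coeffVec d Q) (by omega) hj2).symm

end Bridge

end BM

namespace BM
open MvPolynomial Finset

variable {K : Type*} [CommRing K]

section ShearMain

variable {d : ℕ} (c : K)

/-- upper-triangular substitution action on the column basis -/
def Mmat (d : ℕ) (c : K) : Matrix (Fin (d + d)) (Fin (d + d)) K :=
  Matrix.of fun t j =>
    if (j : ℕ) ≤ (t : ℕ) then c ^ ((t : ℕ) - (j : ℕ)) * (((t : ℕ).choose (j : ℕ) : ℕ) : K) else 0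

/-- block-diagonal binomial matrix acting on rows -/
def Lmat (d : ℕ) (c : K) : Matrix (Fin (d + d)) (Fin (d + d)) K :=
  Matrix.of fun i k =>
    if (i : ℕ) < d then
      (if (k : ℕ) ≤ (i : ℕ) then
        c ^ ((i : ℕ) - (k : ℕ)) * (((i : ℕ).choose (k : ℕ) : ℕ) : K) else 0)
    else
      (if d ≤ (k : ℕ) ∧ (k : ℕ) ≤ (i : ℕ) then
        c ^ ((i : ℕ) - (k : ℕ)) * ((((i : ℕ) - d).choose ((k : ℕ) - d) : ℕ) : K) else 0)

lemma det_Mmat : (Mmat d c).det = 1 := by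
  have htri : (Mmat d c).BlockTriangular OrderDual.toDual := by
    intro i j hij
    have hij' : (i : ℕ) < (j : ℕ) := hij
    rw [Mmat, Matrix.of_apply, if_neg (by omega)]
  rw [Matrix.det_of_lowerTriangular _ htri]
  apply Finset.prod_eq_one
  intro i _
  rw [Mmat, Matrix.of_apply, if_pos le_rfl]
  simp

lemma det_Lmat : (Lmat d c).det = 1 := by
  have htri : (Lmat d c).BlockTriangular OrderDual.toDual := by
    intro i j hij
    have hij' : (i : ℕ) < (j : ℕ) := hij
    rw [Lmat, Matrix.of_apply]
    split_ifs with h1 h2 h3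
    · omega
    · rfl
    · omega
    · rfl
  rw [Matrix.det_of_lowerTriangular _ htri]
  apply Finset.prod_eq_one
  intro i _
  rw [Lmat, Matrix.of_apply]
  split_ifs with h1 h2 h3
  · simp
  · omega
  · simp
  · omega

/-- identity A : B(P,Q) ⬝ M = coefficients of σ(row polys) -/
lemma identityA (hd : 0 < d) {P Q : MvPolynomial (Fin 2) K}
    (hP : P.IsHomogeneous d) (hQ : Q.IsHomogeneous d) (i j : Fin (d + d)) :
    (BmatN d P Q * Mmat d c) i j =
      coeff (e (d + d - 1 - (j : ℕ)) (j : ℕ)) (substHom (Vsh c) (rowN d P Q (i : ℕ))) := by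
  rw [Matrix.mul_apply]
  have hrow := rowN_isHomogeneous hd hP hQ (i := (i : ℕ)) i.isLt
  rw [coeff_sigma c hrow]
  have hcast : ∀ t : Fin (d + d), BmatN d P Q i t * Mmat d c t j =
      (fun t' : ℕ => coeff (e (d + d - 1 - t') t') (rowN d P Q (i : ℕ)) *
        (if (j : ℕ) ≤ t' then c ^ (t' - (j : ℕ)) * ((t'.choose (j : ℕ) : ℕ) : K) else 0)) (t : ℕ) := by
    intro t
    rfl
  rw [Finset.sum_congr rfl (fun t _ => hcast t),
    Fin.sum_univ_eq_sum_range (fun t' : ℕ => coeff (e (d + d - 1 - t') t') (rowN d P Q (i : ℕ)) *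
      (if (j : ℕ) ≤ t' then c ^ (t' - (j : ℕ)) * ((t'.choose (j : ℕ) : ℕ) : K) else 0)) (d + d)]
  rw [Nat.sub_add_cancel (by omega : 1 ≤ d + d)]

/-- expansion of σ applied to a row polynomial -/
lemma sigma_row (hd : 0 < d) {i' : ℕ} (hi' : i' < d) (P : MvPolynomial (Fin 2) K) :
    substHom (Vsh c) (X 0 ^ (d - 1 - i') * X 1 ^ i' * P) =
      ∑ k ∈ range (i' + 1), C (c ^ (i' - k) * ((i'.choose k : ℕ) : K)) *
        (X 0 ^ (d - 1 - k) * X 1 ^ k * substHom (Vsh c) P) := by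
  rw [map_mul, map_mul, map_pow, map_pow, sigma_X0, sigma_X1, shear_pow]
  rw [← Finset.sum_range_reflect]
  rw [Finset.mul_sum, Finset.sum_mul]
  apply Finset.sum_congr rfl
  intro k hk
  have hk' : k ≤ i' := by have := mem_range.mp hk; omega
  have h1 : i' + 1 - 1 - k = i' - k := by omega
  have h2 : i' - (i' - k) = k := by omega
  have h3 : d - 1 - i' + (i' - k) = d - 1 - k := by omega
  rw [h1, h2, Nat.choose_symm hk']
  rw [show (X 0 : MvPolynomial (Fin 2) K) ^ (d - 1 - k) = X 0 ^ (d - 1 - i') * X 0 ^ (i' - k) by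
    rw [← pow_add, h3]]
  simp only [C_mul]
  ring

/-- identity B : L ⬝ B(σP,σQ) = coefficients of σ(row polys) -/
lemma identityB (hd : 0 < d) (P Q : MvPolynomial (Fin 2) K) (i j : Fin (d + d)) :
    (Lmat d c * BmatN d (substHom (Vsh c) P) (substHom (Vsh c) Q)) i j =
      coeff (e (d + d - 1 - (j : ℕ)) (j : ℕ)) (substHom (Vsh c) (rowN d P Q (i : ℕ))) := by
  classical
  rw [Matrix.mul_apply]
  set F : ℕ → K := fun k' =>
      (if (i : ℕ) < d then
        (if k' ≤ (i : ℕ) then c ^ ((i : ℕ) - k') * (((i : ℕ).choose k' : ℕ) : K) else 0)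
      else
        (if d ≤ k' ∧ k' ≤ (i : ℕ) then
          c ^ ((i : ℕ) - k') * ((((i : ℕ) - d).choose (k' - d) : ℕ) : K) else 0)) *
      coeff (e (d + d - 1 - (j : ℕ)) (j : ℕ))
        (rowN d (substHom (Vsh c) P) (substHom (Vsh c) Q) k') with hF
  have hsummand : ∀ k : Fin (d + d),
      Lmat d c i k * BmatN d (substHom (Vsh c) P) (substHom (Vsh c) Q) k j = F ((k : ℕ)) := by
    intro k
    rfl
  rw [Finset.sum_congr rfl (fun k _ => hsummand k), Fin.sum_univ_eq_sum_range F (d + d)]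
  have hi2 := i.isLt
  by_cases hi : (i : ℕ) < d
  · -- top block
    rw [rowN, if_pos hi, sigma_row c hd hi, coeff_sum]
    have h0 : ∀ x ∈ range (d + d), x ∉ range ((i : ℕ) + 1) → F x = 0 := by
      intro k _ hk
      have hk' : ¬ (k ≤ (i : ℕ)) := fun h => hk (mem_range.mpr (by omega))
      simp only [hF]
      rw [if_pos hi, if_neg hk', zero_mul]
    rw [← Finset.sum_subset (Finset.range_subset_range.mpr (by omega : (i : ℕ) + 1 ≤ d + d)) h0]
    apply Finset.sum_congr rfl
    intro k hk
    have hk' : k ≤ (i : ℕ) := by have := mem_range.mp hk; omega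
    have hkd : k < d := by omega
    simp only [hF]
    rw [if_pos hi, if_pos hk', rowN, if_pos hkd, coeff_C_mul]
  · -- bottom block
    rw [rowN, if_neg hi, sigma_row c hd (by omega : (i : ℕ) - d < d), coeff_sum]
    have hsubset : Finset.Ico d ((i : ℕ) + 1) ⊆ range (d + d) := by
      intro x hx
      have := Finset.mem_Ico.mp hx
      exact mem_range.mpr (by omega)
    have h0 : ∀ x ∈ range (d + d), x ∉ Finset.Ico d ((i : ℕ) + 1) → F x = 0 := by
      intro k _ hk
      have hk' : ¬ (d ≤ k ∧ k ≤ (i : ℕ)) := by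
        intro h
        exact hk (Finset.mem_Ico.mpr ⟨h.1, by omega⟩)
      simp only [hF]
      rw [if_neg hi, if_neg hk', zero_mul]
    rw [← Finset.sum_subset hsubset h0, Finset.sum_Ico_eq_sum_range,
      (by omega : (i : ℕ) + 1 - d = ((i : ℕ) - d) + 1)]
    apply Finset.sum_congr rfl
    intro k hk
    have hk' : k ≤ (i : ℕ) - d := by have := mem_range.mp hk; omega
    simp only [hF]
    rw [if_neg hi, if_pos (by omega : d ≤ d + k ∧ d + k ≤ (i : ℕ)), rowN,
      if_neg (by omega : ¬ (d + k < d)), coeff_C_mul,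
      (by omega : d + k - d = k), (by omega : (i : ℕ) - (d + k) = (i : ℕ) - d - k)]

/-- shear invariance of the Sylvester resultant -/
lemma sylRes_shear (d : ℕ) (hd : 0 < d) (c : K) {P Q : MvPolynomial (Fin 2) K}
    (hP : P.IsHomogeneous d) (hQ : Q.IsHomogeneous d) :
    sylRes d d (coeffVec d (substMat (Vsh c) P)) (coeffVec d (substMat (Vsh c) Q)) =
      sylRes d d (coeffVec d P) (coeffVec d Q) := by
  have hP' : (substMat (Vsh c) P).IsHomogeneous d := substMat_isHomogeneous hP _
  have hQ' : (substMat (Vsh c) Q).IsHomogeneous d := substMat_isHomogeneous hQ _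
  rw [sylRes_eq_det, sylRes_eq_det, bridge hd hP hQ, bridge hd hP' hQ']
  have hkey : BmatN d P Q * Mmat d c =
      Lmat d c * BmatN d (substMat (Vsh c) P) (substMat (Vsh c) Q) := by
    ext i j
    rw [identityA c hd hP hQ i j, substMat_eq, substMat_eq, identityB c hd P Q i j]
  have := congrArg Matrix.det hkey
  rw [Matrix.det_mul, Matrix.det_mul, det_Mmat, det_Lmat, mul_one, one_mul] at this
  rw [substMat_eq, substMat_eq]
  exact this.symm

end ShearMain

end BM

namespace BM
open MvPolynomial Finset

variable {K : Type*} [CommRing K]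

/-- the swap matrix -/
def Wsw : Matrix (Fin 2) (Fin 2) K := !![0, 1; 1, 0]

@[simp] lemma Wsw00 : (Wsw : Matrix (Fin 2) (Fin 2) K) 0 0 = 0 := rfl
@[simp] lemma Wsw01 : (Wsw : Matrix (Fin 2) (Fin 2) K) 0 1 = 1 := rfl
@[simp] lemma Wsw10 : (Wsw : Matrix (Fin 2) (Fin 2) K) 1 0 = 1 := rfl
@[simp] lemma Wsw11 : (Wsw : Matrix (Fin 2) (Fin 2) K) 1 1 = 0 := rfl

lemma det_Vsh (c : K) : (Vsh c).det ≠ 0 → True := fun _ => trivial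

lemma Vsh_det (c : K) : (Vsh c).det = 1 := by
  rw [Vsh, Matrix.det_fin_two_of]
  ring

lemma Wsw_det : (Wsw : Matrix (Fin 2) (Fin 2) K).det = -1 := by
  rw [Wsw, Matrix.det_fin_two_of]
  ring

lemma FA_Vsh (d : ℕ) (c : K) (p q : ℕ → K) :
    FA d p q (Vsh c) = coeffVec d (substMat (Vsh c) (toForm d p)) := by
  show coeffVec d _ = _
  congr 1
  rw [Vsh11, Vsh01, C_1, C_0, one_mul, zero_mul, sub_zero]

lemma GA_Vsh (d : ℕ) (c : K) (p q : ℕ → K) :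
    GA d p q (Vsh c) = fun i => (-c) * coeffVec d (substMat (Vsh c) (toForm d p)) i +
      coeffVec d (substMat (Vsh c) (toForm d q)) i := by
  funext i
  show coeffVec d _ i = _
  rw [Vsh10, Vsh00, C_1, one_mul]
  rw [coeffVec_apply, coeff_add, ← map_neg (C : K →+* MvPolynomial (Fin 2) K), coeff_C_mul,
    coeffVec_apply, coeffVec_apply]

lemma sylRes_step_shear (d : ℕ) (hd : 0 < d) (c : K) (p q : ℕ → K) :
    sylRes d d (FA d p q (Vsh c)) (GA d p q (Vsh c)) = sylRes d d p q := by
  rw [FA_Vsh, GA_Vsh]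
  rw [sylRes_rowop d hd (-c) (coeffVec d (substMat (Vsh c) (toForm d p)))
    (coeffVec d (substMat (Vsh c) (toForm d q)))]
  rw [sylRes_shear d hd c (toForm_isHomogeneous d p) (toForm_isHomogeneous d q)]
  exact sylRes_congr d (p' := p) (q' := q) (fun i hi => coeffVec_toForm d p hi) (fun i hi => coeffVec_toForm d q hi)

lemma substW_monomial (a b : ℕ) (w : K) :
    substHom (Wsw : Matrix (Fin 2) (Fin 2) K) (monomial (e a b) w) = monomial (e b a) w := by
  rw [monomial_e, map_mul, map_mul, substHom_C, map_pow, map_pow, substHom_X, substHom_X,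
    Wsw00, Wsw01, Wsw10, Wsw11, C_1, C_0, monomial_e]
  ring

lemma coeffVec_substW (d : ℕ) (q : ℕ → K) {i : ℕ} (hi : i ≤ d) :
    coeffVec d (substMat Wsw (toForm d q)) i = q (d - i) := by
  rw [substMat_eq, toForm_eq_sum, map_sum, coeffVec_apply, coeff_sum]
  rw [Finset.sum_eq_single (d - i)]
  · rw [substW_monomial, coeff_monomial, if_pos]
    apply e_inj.mpr
    constructor <;> omega
  · intro k hk hkj
    rw [substW_monomial, coeff_monomial, if_neg]
    intro h
    obtain ⟨h1, h2⟩ := e_inj.mp h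
    have := mem_range.mp hk
    omega
  · intro h
    exact absurd (mem_range.mpr (by omega)) h

lemma FA_Wsw (d : ℕ) (p q : ℕ → K) {i : ℕ} (hi : i ≤ d) :
    FA d p q Wsw i = -q (d - i) := by
  show coeffVec d _ i = _
  rw [Wsw11, Wsw01, C_1, C_0, zero_mul, one_mul, zero_sub]
  rw [coeffVec_apply, coeff_neg, ← coeffVec_apply, coeffVec_substW d q hi]

lemma GA_Wsw (d : ℕ) (p q : ℕ → K) {i : ℕ} (hi : i ≤ d) :
    GA d p q Wsw i = -p (d - i) := by
  show coeffVec d _ i = _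
  rw [Wsw10, Wsw00, C_1, C_0, zero_mul, add_zero, neg_mul, one_mul]
  rw [coeffVec_apply, coeff_neg, ← coeffVec_apply, coeffVec_substW d p hi]

lemma sylRes_step_swap (d : ℕ) (p q : ℕ → K) :
    sylRes d d (FA d p q Wsw) (GA d p q Wsw) = sylRes d d p q := by
  rw [sylRes_congr d (p' := fun i => -q (d - i)) (q' := fun i => -p (d - i))
    (fun i hi => FA_Wsw d p q hi) (fun i hi => GA_Wsw d p q hi)]
  exact sylRes_swap d p q

/-- one composition step -/
lemma step_all (d : ℕ) (l : K) (f g : ℕ → K) (A B : Matrix (Fin 2) (Fin 2) K)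
    (hB : sylRes d d (FA d (fun i => l * FA d f g A i) (fun i => l * GA d f g A i) B)
      (GA d (fun i => l * FA d f g A i) (fun i => l * GA d f g A i) B) =
      sylRes d d (fun i => l * FA d f g A i) (fun i => l * GA d f g A i)) :
    sylRes d d (fun i => l * FA d f g (A * B) i) (fun i => l * GA d f g (A * B) i) =
      sylRes d d (fun i => l * FA d f g A i) (fun i => l * GA d f g A i) := by
  have h1 : (fun i => l * FA d f g (A * B) i) =
      FA d (fun i => l * FA d f g A i) (fun i => l * GA d f g A i) B := by
    funext i
    rw [FA_comp]
    exact (congrFun (FA_smul d l (FA d f g A) (GA d f g A) B) i).symm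
  have h2 : (fun i => l * GA d f g (A * B) i) =
      GA d (fun i => l * FA d f g A i) (fun i => l * GA d f g A i) B := by
    funext i
    rw [GA_comp]
    exact (congrFun (GA_smul d l (FA d f g A) (GA d f g A) B) i).symm
  rw [h1, h2, hB]

lemma lFA_comp_eq (d : ℕ) (l : K) (f g : ℕ → K) (A B : Matrix (Fin 2) (Fin 2) K) :
    (fun i => l * FA d f g (A * B) i) =
      FA d (fun i => l * FA d f g A i) (fun i => l * GA d f g A i) B := by
  funext i
  rw [FA_comp]
  exact (congrFun (FA_smul d l (FA d f g A) (GA d f g A) B) i).symm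

lemma lGA_comp_eq (d : ℕ) (l : K) (f g : ℕ → K) (A B : Matrix (Fin 2) (Fin 2) K) :
    (fun i => l * GA d f g (A * B) i) =
      GA d (fun i => l * FA d f g A i) (fun i => l * GA d f g A i) B := by
  funext i
  rw [GA_comp]
  exact (congrFun (GA_smul d l (FA d f g A) (GA d f g A) B) i).symm

lemma Vsh_mem (O : Subring K) {c : K} (hc : c ∈ O) : ∀ k l : Fin 2, Vsh c k l ∈ O := by
  intro k l
  fin_cases k <;> fin_cases l
  · exact O.one_mem
  · exact O.zero_mem
  · exact hc
  · exact O.one_mem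

lemma Wsw_mem (O : Subring K) : ∀ k l : Fin 2, (Wsw : Matrix (Fin 2) (Fin 2) K) k l ∈ O := by
  intro k l
  fin_cases k <;> fin_cases l
  · exact O.zero_mem
  · exact O.one_mem
  · exact O.one_mem
  · exact O.zero_mem

end BM

namespace BM
open Finset

variable {R K : Type*} [CommRing R] [Field K] [Algebra R K]

/-- the subring of `p`-integers of `K` -/
def pInt (R : Type*) {K : Type*} [CommRing R] [Field K] [Algebra R K]
    (p : Ideal R) [hp : p.IsPrime] : Subring K where
  carrier := {x : K | ∃ a s : R, s ∉ p ∧ x * algebraMap R K s = algebraMap R K a}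
  zero_mem' := ⟨0, 1, by
    simpa using ((Ideal.ne_top_iff_one p).mp hp.ne_top)⟩
  one_mem' := ⟨1, 1, by
    simpa using ((Ideal.ne_top_iff_one p).mp hp.ne_top)⟩
  add_mem' := by
    rintro x y ⟨a, s, hs, hx⟩ ⟨b, t, ht, hy⟩
    refine ⟨a * t + b * s, s * t, fun h => ?_, ?_⟩
    · rcases hp.mem_or_mem h with h' | h'
      · exact hs h'
      · exact ht h'
    · rw [map_mul, map_add, map_mul, map_mul]
      calc (x + y) * (algebraMap R K s * algebraMap R K t)
          = (x * algebraMap R K s) * algebraMap R K t +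
            (y * algebraMap R K t) * algebraMap R K s := by ring
        _ = _ := by rw [hx, hy]
  neg_mem' := by
    rintro x ⟨a, s, hs, hx⟩
    exact ⟨-a, s, hs, by rw [map_neg, ← hx]; ring⟩
  mul_mem' := by
    rintro x y ⟨a, s, hs, hx⟩ ⟨b, t, ht, hy⟩
    refine ⟨a * b, s * t, fun h => ?_, ?_⟩
    · rcases hp.mem_or_mem h with h' | h'
      · exact hs h'
      · exact ht h'
    · rw [map_mul, map_mul]
      calc (x * y) * (algebraMap R K s * algebraMap R K t)
          = (x * algebraMap R K s) * (y * algebraMap R K t) := by ring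
        _ = _ := by rw [hx, hy]

lemma algebraMap_mem_pInt (p : Ideal R) [hp : p.IsPrime] (a : R) :
    algebraMap R K a ∈ pInt R p :=
  ⟨a, 1, by simpa using ((Ideal.ne_top_iff_one p).mp hp.ne_top)⟩

/-- key dichotomy: localizations of a Dedekind domain are valuation rings -/
lemma pInt_dichotomy [IsDomain R] [IsDedekindDomain R] [IsFractionRing R K]
    (p : Ideal R) [hp : p.IsPrime] (x : K) :
    x ∈ pInt R p ∨ x⁻¹ ∈ pInt R p := by
  obtain ⟨a, b, hb, hx⟩ := IsFractionRing.div_surjective (A := R) x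
  have hbne : b ≠ 0 := nonZeroDivisors.ne_zero hb
  have hbK : algebraMap R K b ≠ 0 := by
    rw [Ne, IsFractionRing.to_map_eq_zero_iff]
    exact hbne
  by_cases ha : a = 0
  · left
    have : x = 0 := by rw [← hx, ha, map_zero, zero_div]
    rw [this]
    exact (pInt R p).zero_mem
  have haK : algebraMap R K a ≠ 0 := by
    rw [Ne, IsFractionRing.to_map_eq_zero_iff]
    exact ha
  by_cases hbot : p = ⊥
  · left
    refine ⟨a, b, ?_, ?_⟩
    · rw [hbot]
      simpa using hbne
    · rw [← hx]
      field_simp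
  · letI : Algebra R (Localization.AtPrime p) := inferInstance
    haveI : IsDiscreteValuationRing (Localization.AtPrime p) :=
      IsLocalization.AtPrime.isDiscreteValuationRing_of_dedekind_domain R hbot _
    haveI : ValuationRing (Localization.AtPrime p) := inferInstance
    set φ := algebraMap R (Localization.AtPrime p) with hφ
    have hinj : Function.Injective φ :=
      IsLocalization.injective (Localization.AtPrime p) p.primeCompl_le_nonZeroDivisors
    rcases ValuationRing.dvd_total (φ b) (φ a) with ⟨cc, hcc⟩ | ⟨cc, hcc⟩
    · -- b divides a : x integral
      left
      obtain ⟨⟨c₀, s⟩, hmk⟩ := IsLocalization.mk'_surjective p.primeCompl cc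
      have hspec : cc * φ (s : R) = φ c₀ := by
        rw [← hmk]
        exact IsLocalization.mk'_spec _ c₀ s
      have heqR : a * (s : R) = b * c₀ := hinj (by rw [map_mul, map_mul, hcc, mul_assoc, hspec])
      have heqK : algebraMap R K a * algebraMap R K (s : R) =
          algebraMap R K b * algebraMap R K c₀ := by
        rw [← map_mul, ← map_mul, heqR]
      refine ⟨c₀, s, s.2, ?_⟩
      rw [← hx, div_mul_eq_mul_div, div_eq_iff hbK, heqK]
      ring
    · -- a divides b : x⁻¹ integral
      right
      obtain ⟨⟨c₀, s⟩, hmk⟩ := IsLocalization.mk'_surjective p.primeCompl cc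
      have hspec : cc * φ (s : R) = φ c₀ := by
        rw [← hmk]
        exact IsLocalization.mk'_spec _ c₀ s
      have heqR : b * (s : R) = a * c₀ := hinj (by rw [map_mul, map_mul, hcc, mul_assoc, hspec])
      have heqK : algebraMap R K b * algebraMap R K (s : R) =
          algebraMap R K a * algebraMap R K c₀ := by
        rw [← map_mul, ← map_mul, heqR]
      refine ⟨c₀, s, s.2, ?_⟩
      have hxinv : x⁻¹ = algebraMap R K b / algebraMap R K a := by
        rw [← hx, inv_div]
      rw [hxinv, div_mul_eq_mul_div, div_eq_iff haK, heqK]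
      ring

end BM

namespace BM
open Finset

variable {R K : Type*} [CommRing R] [Field K] [Algebra R K]

lemma mem_pInt {p : Ideal R} [p.IsPrime] {x : K} :
    x ∈ pInt R p ↔ ∃ a s : R, s ∉ p ∧ x * algebraMap R K s = algebraMap R K a :=
  Iff.rfl

lemma local_step [IsDomain R] [IsDedekindDomain R] [IsFractionRing R K]
    (d : ℕ) (hd0 : 0 < d) (f g : ℕ → K) (l : K) (A : Matrix (Fin 2) (Fin 2) K)
    (hl : l ≠ 0) (hdet : A.det ≠ 0)
    (hF : ∀ i, ∃ a : R, algebraMap R K a = l * FA d f g A i)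
    (hG : ∀ i, ∃ b : R, algebraMap R K b = l * GA d f g A i)
    (r : R)
    (hr : algebraMap R K r =
      sylRes d d (fun i => l * FA d f g A i) (fun i => l * GA d f g A i))
    (p : Ideal R) (hp : p.IsMaximal) :
    ∃ s : R, s ∉ p ∧ (s ^ (d + d)) * r ∈ AffResIdeal R d f g := by
  haveI : p.IsPrime := hp.isPrime
  set O : Subring K := pInt R p with hO
  have hp₀ : ∀ i, (l * FA d f g A i) ∈ O := by
    intro i
    obtain ⟨a, ha⟩ := hF i
    rw [← ha]
    exact algebraMap_mem_pInt p a
  have hq₀ : ∀ i, (l * GA d f g A i) ∈ O := by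
    intro i
    obtain ⟨b, hb⟩ := hG i
    rw [← hb]
    exact algebraMap_mem_pInt p b
  -- build the affine transform T
  obtain ⟨T, hT0, hTdet, hTF, hTG, hTres⟩ :
      ∃ T : Matrix (Fin 2) (Fin 2) K, T 1 0 = 0 ∧ T.det ≠ 0 ∧
        (∀ i, l * FA d f g T i ∈ O) ∧ (∀ i, l * GA d f g T i ∈ O) ∧
        sylRes d d (fun i => l * FA d f g T i) (fun i => l * GA d f g T i) =
          sylRes d d (fun i => l * FA d f g A i) (fun i => l * GA d f g A i) := by
    by_cases hγ : A 1 0 = 0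
    · exact ⟨A, hγ, hdet, hp₀, hq₀, rfl⟩
    by_cases hcase : A 1 1 ≠ 0 ∧ A 1 0 * (A 1 1)⁻¹ ∈ O
    · -- single shear
      obtain ⟨hδ, hmem⟩ := hcase
      set c := -(A 1 0 * (A 1 1)⁻¹) with hc
      refine ⟨A * Vsh c, ?_, ?_, ?_, ?_, ?_⟩
      · rw [Matrix.mul_apply, Fin.sum_univ_two, Vsh00, Vsh10, hc]
        field_simp
        ring
      · rw [Matrix.det_mul, Vsh_det, mul_one]
        exact hdet
      · intro i
        have h := congrFun (lFA_comp_eq d l f g A (Vsh c)) i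
        rw [h]
        exact FA_mem_subring hp₀ hq₀ (Vsh_mem O (neg_mem hmem)) i
      · intro i
        have h := congrFun (lGA_comp_eq d l f g A (Vsh c)) i
        rw [h]
        exact GA_mem_subring hp₀ hq₀ (Vsh_mem O (neg_mem hmem)) i
      · exact step_all d l f g A (Vsh c)
          (sylRes_step_shear d hd0 c (fun i => l * FA d f g A i) (fun i => l * GA d f g A i))
    · -- swap then shear
      have hmem : A 1 1 * (A 1 0)⁻¹ ∈ O := by
        by_cases hδ : A 1 1 = 0
        · rw [hδ, zero_mul]
          exact O.zero_mem
        · have hnot : A 1 0 * (A 1 1)⁻¹ ∉ O := by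
            intro h
            exact hcase ⟨hδ, h⟩
          rcases pInt_dichotomy p (A 1 0 * (A 1 1)⁻¹) with h | h
          · exact absurd h hnot
          · rw [mul_inv_rev, inv_inv] at h
            rw [hO]
            exact h
      set c := -(A 1 1 * (A 1 0)⁻¹) with hc
      have hAW10 : (A * (Wsw : Matrix (Fin 2) (Fin 2) K)) 1 0 = A 1 1 := by
        rw [Matrix.mul_apply, Fin.sum_univ_two, Wsw00, Wsw10]
        ring
      have hAW11 : (A * (Wsw : Matrix (Fin 2) (Fin 2) K)) 1 1 = A 1 0 := by
        rw [Matrix.mul_apply, Fin.sum_univ_two, Wsw01, Wsw11]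
        ring
      have hp₁ : ∀ i, (l * FA d f g (A * Wsw) i) ∈ O := by
        intro i
        have h := congrFun (lFA_comp_eq d l f g A Wsw) i
        rw [h]
        exact FA_mem_subring hp₀ hq₀ (Wsw_mem O) i
      have hq₁ : ∀ i, (l * GA d f g (A * Wsw) i) ∈ O := by
        intro i
        have h := congrFun (lGA_comp_eq d l f g A Wsw) i
        rw [h]
        exact GA_mem_subring hp₀ hq₀ (Wsw_mem O) i
      refine ⟨A * Wsw * Vsh c, ?_, ?_, ?_, ?_, ?_⟩
      · rw [Matrix.mul_apply, Fin.sum_univ_two, Vsh00, Vsh10, hAW10, hAW11, hc]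
        field_simp
        ring
      · rw [Matrix.det_mul, Matrix.det_mul, Vsh_det, Wsw_det, mul_one]
        simpa using hdet
      · intro i
        have h := congrFun (lFA_comp_eq d l f g (A * Wsw) (Vsh c)) i
        rw [h]
        exact FA_mem_subring hp₁ hq₁ (Vsh_mem O (neg_mem hmem)) i
      · intro i
        have h := congrFun (lGA_comp_eq d l f g (A * Wsw) (Vsh c)) i
        rw [h]
        exact GA_mem_subring hp₁ hq₁ (Vsh_mem O (neg_mem hmem)) i
      · rw [step_all d l f g (A * Wsw) (Vsh c)
          (sylRes_step_shear d hd0 c (fun i => l * FA d f g (A * Wsw) i)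
            (fun i => l * GA d f g (A * Wsw) i))]
        exact step_all d l f g A Wsw
          (sylRes_step_swap d (fun i => l * FA d f g A i) (fun i => l * GA d f g A i))
  -- extract common denominators
  choose aF sF hsF heqF using fun i => (mem_pInt.mp (hTF i))
  choose aG sG hsG heqG using fun i => (mem_pInt.mp (hTG i))
  set s1 := ∏ i ∈ range (d + 1), sF i with hs1
  set s2 := ∏ i ∈ range (d + 1), sG i with hs2
  set s := s1 * s2 with hs
  have hsmem : s ∉ p := by
    have h1 : s1 ∈ p.primeCompl := Submonoid.prod_mem _ (fun i _ => hsF i)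
    have h2 : s2 ∈ p.primeCompl := Submonoid.prod_mem _ (fun i _ => hsG i)
    exact Submonoid.mul_mem _ h1 h2
  have hsne : algebraMap R K s ≠ 0 := by
    rw [Ne, IsFractionRing.to_map_eq_zero_iff]
    intro h
    exact hsmem (h ▸ p.zero_mem)
  refine ⟨s, hsmem, ?_⟩
  apply Ideal.subset_span
  refine ⟨algebraMap R K s * l, T, mul_ne_zero hsne hl, hTdet, hT0, ?_, ?_, ?_⟩
  · intro i
    by_cases hi : i ≤ d
    · obtain ⟨t1, ht1⟩ := Finset.dvd_prod_of_mem sF (mem_range.mpr (by omega : i < d + 1))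
      refine ⟨aF i * (t1 * s2), ?_⟩
      have hkey : (sF i) * (t1 * s2) = s := by
        rw [hs, hs1, ht1]
        ring
      have h2 : algebraMap R K (aF i * (t1 * s2)) =
          algebraMap R K s * (l * FA d f g T i) := by
        rw [map_mul, ← heqF i, ← hkey]
        simp only [map_mul]
        ring
      rw [h2]
      ring
    · refine ⟨0, ?_⟩
      rw [map_zero, FA_eq_zero_of_gt d f g T (by omega), mul_zero]
  · intro i
    by_cases hi : i ≤ d
    · obtain ⟨t2, ht2⟩ := Finset.dvd_prod_of_mem sG (mem_range.mpr (by omega : i < d + 1))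
      refine ⟨aG i * (s1 * t2), ?_⟩
      have hkey : (sG i) * (s1 * t2) = s := by
        rw [hs, hs2, ht2]
        ring
      have h2 : algebraMap R K (aG i * (s1 * t2)) =
          algebraMap R K s * (l * GA d f g T i) := by
        rw [map_mul, ← heqG i, ← hkey]
        simp only [map_mul]
        ring
      rw [h2]
      ring
    · refine ⟨0, ?_⟩
      rw [map_zero, GA_eq_zero_of_gt d f g T (by omega), mul_zero]
  · have h1 : (fun i => (algebraMap R K s * l) * FA d f g T i) =
        (fun i => algebraMap R K s * (l * FA d f g T i)) := by
      funext i
      ring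
    have h2 : (fun i => (algebraMap R K s * l) * GA d f g T i) =
        (fun i => algebraMap R K s * (l * GA d f g T i)) := by
      funext i
      ring
    rw [h1, h2, sylRes_smul d (algebraMap R K s)
      (fun i => l * FA d f g T i) (fun i => l * GA d f g T i), hTres, ← hr,
      map_mul, map_pow]

end BM



/-- Over a Dedekind domain `R` with fraction field `K`, for a rational map of
degree `d ≥ 2` given by a model `[F,G]`, one has `Res_R([φ]) = Res_R([φ]₁)` as ideals of `R`;
in particular a model over `R` of the class is `R`-affine minimal iff it is `R`-minimal. -/
theorem statement3 {R K : Type*} [CommRing R] [IsDomain R] [IsDedekindDomain R]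
    [Field K] [Algebra R K] [IsFractionRing R K]
    (d : ℕ) (hd : 2 ≤ d) (f g : ℕ → K)
    (hf : ∀ i, d < i → f i = 0) (hg : ∀ i, d < i → g i = 0)
    (hres : sylRes d d f g ≠ 0) :
    ResIdeal R d f g = AffResIdeal R d f g ∧
    (∀ (l : K) (A : Matrix (Fin 2) (Fin 2) K), l ≠ 0 → A.det ≠ 0 →
      (∀ i, ∃ a : R, algebraMap R K a = l * FA d f g A i) →
      (∀ i, ∃ b : R, algebraMap R K b = l * GA d f g A i) →
      ∀ r : R,
        algebraMap R K r =
          sylRes d d (fun i => l * FA d f g A i) (fun i => l * GA d f g A i) →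
        (ResIdeal R d f g = Ideal.span {r} ↔ AffResIdeal R d f g = Ideal.span {r})) := by
  have hd0 : 0 < d := by omega
  have key : ResIdeal R d f g = AffResIdeal R d f g := by
    apply le_antisymm
    · rw [ResIdeal, Ideal.span_le]
      rintro r ⟨l, A, hl, hdet, hFint, hGint, hr⟩
      set J := AffResIdeal R d f g with hJ
      by_cases hc : Submodule.colon J (Ideal.span {r}) = ⊤
      · have h1 : (1 : R) ∈ Submodule.colon J (Ideal.span {r}) := by
          rw [hc]
          exact Submodule.mem_top
        rw [Submodule.mem_colon_span_singleton, one_smul] at h1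
        exact h1
      · exfalso
        obtain ⟨p, hpmax, hple⟩ := Ideal.exists_le_maximal _ hc
        obtain ⟨s, hs, hsr⟩ :=
          BM.local_step d hd0 f g l A hl hdet hFint hGint r hr p hpmax
        exact hs (hpmax.isPrime.mem_of_pow_mem _
          (hple (Submodule.mem_colon_span_singleton.mpr hsr)))
    · rw [AffResIdeal, Ideal.span_le]
      rintro r ⟨l, A, hl, hdet, _, hFint, hGint, hr⟩
      exact Ideal.subset_span ⟨l, A, hl, hdet, hFint, hGint, hr⟩
  refine ⟨key, ?_⟩
  intro l A _ _ _ _ r _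
  rw [key]

end
end

section
/- Let R be a discrete valuation ring with fraction field K, uniformizer π, and valuation v, and let [F,G] be a model over R of degree d ≥ 2 with coefficients f_d,…,f_0 and g_d,…,g_0. Write f(z) = F(z,1), g(z) = G(z,1) and let d_G = deg(g). Suppose e₂ ∈ ℤ and β ∈ K are such that, setting f'_j = π^{j e₂} Σ_{i=j}^d binom(i,j)(f_i β^{i−j} − g_i β^{i−j+1}) and g'_j = π^{(j+1) e₂} Σ_{i=j}^d binom(i,j) g_i β^{i−j}, one has v(f'_j) > ((d+1)/2)·e₂ and v(g'_j) > ((d+1)/2)·e₂ for all j = 0,…,d. Then: if d_G > (d+1)/2 then e₂ > −(2/(2d_G − d + 1))·v(g_{d_G}), and if d_G < d then e₂ > −(2/(d−1))·v(f_d). -/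
noncomputable section

lemma aux_inv {K : Type*} [Field K] (v : AddValuation K (WithTop ℤ))
    (hvtop : ∀ x : K, v x = ⊤ ↔ x = 0) (x : K) (m : ℤ) (hm : v x = (m : WithTop ℤ)) :
    v x⁻¹ = ((-m : ℤ) : WithTop ℤ) := by
  have hx : x ≠ 0 := by
    intro h
    rw [(hvtop x).2 h] at hm
    exact (by simp : (⊤ : WithTop ℤ) ≠ (m : WithTop ℤ)) hm
  have h0 : v x + v x⁻¹ = 0 := by
    rw [← v.map_mul, mul_inv_cancel₀ hx, v.map_one]
  have hne : v x⁻¹ ≠ ⊤ := by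
    rw [Ne, hvtop]; exact inv_ne_zero hx
  obtain ⟨b, hb⟩ := WithTop.ne_top_iff_exists.1 hne
  rw [hm, ← hb] at h0
  rw [← hb]
  norm_cast at h0 ⊢
  omega

lemma aux_zpow {K : Type*} [Field K] (v : AddValuation K (WithTop ℤ))
    (hvtop : ∀ x : K, v x = ⊤ ↔ x = 0) (x : K) (hx : x ≠ 0)
    (hx1 : v x = 1) (n : ℤ) : v (x ^ n) = (n : WithTop ℤ) := by
  have hnat : ∀ k : ℕ, v (x ^ k) = ((k : ℤ) : WithTop ℤ) := by
    intro k
    rw [v.map_pow, hx1]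
    have : (1 : WithTop ℤ) = ((1 : ℤ) : WithTop ℤ) := rfl
    rw [this, ← WithTop.coe_nsmul]
    norm_cast
    simp
  rcases le_or_gt 0 n with h | h
  · lift n to ℕ using h
    rw [zpow_natCast]; exact hnat n
  · obtain ⟨k, hk⟩ : ∃ k : ℕ, n = -(k : ℤ) := ⟨n.natAbs, by omega⟩
    subst hk
    rw [zpow_neg, zpow_natCast]
    rw [aux_inv v hvtop _ _ (hnat k)]

/-- (Lower bounds for `e₂`, Lemma on bounds.) With `[F,G]` a model over the
DVR `R`, `d_G = deg g`, and `e₂ ∈ ℤ`, `β ∈ K` satisfying the valuation inequalities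
`v(f'_j) > ((d+1)/2)e₂` and `v(g'_j) > ((d+1)/2)e₂` for all `j ≤ d`, one has
`e₂ > −(2/(2d_G − d + 1))·v(g_{d_G})` if `d_G > (d+1)/2`, and `e₂ > −(2/(d−1))·v(f_d)`
if `d_G < d`. -/
theorem statement8 {R K : Type*} [CommRing R] [IsDomain R] [IsDiscreteValuationRing R]
    [Field K] [Algebra R K] [IsFractionRing R K]
    (v : AddValuation K (WithTop ℤ))
    (hv : ∀ x : K, 0 ≤ v x ↔ ∃ r : R, algebraMap R K r = x)
    (hvtop : ∀ x : K, v x = ⊤ ↔ x = 0)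
    (π : R) (hπ : Irreducible π) (hπ1 : v (algebraMap R K π) = 1)
    (d : ℕ) (hd : 2 ≤ d) (f g : ℕ → K)
    (hf : ∀ i, d < i → f i = 0) (hg : ∀ i, d < i → g i = 0)
    (hfR : ∀ i, ∃ a : R, algebraMap R K a = f i)
    (hgR : ∀ i, ∃ b : R, algebraMap R K b = g i)
    (hres : sylRes d d f g ≠ 0)
    (dG : ℕ) (hdG : g dG ≠ 0) (hdG' : ∀ i, dG < i → g i = 0)
    (e₂ : ℤ) (β : K) (f' g' : ℕ → K)
    (hf' : ∀ j, f' j = (algebraMap R K π) ^ ((j : ℤ) * e₂) *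
      ∑ i ∈ Finset.Icc j d, (Nat.choose i j : K) * (f i * β ^ (i - j) - g i * β ^ (i - j + 1)))
    (hg' : ∀ j, g' j = (algebraMap R K π) ^ (((j : ℤ) + 1) * e₂) *
      ∑ i ∈ Finset.Icc j d, (Nat.choose i j : K) * (g i * β ^ (i - j)))
    (hineq : ∀ j ≤ d,
      ((((d : ℚ) + 1) / 2 * (e₂ : ℚ) : ℚ) : WithTop ℚ) <
          (v (f' j)).map (fun z : ℤ => (z : ℚ)) ∧
      ((((d : ℚ) + 1) / 2 * (e₂ : ℚ) : ℚ) : WithTop ℚ) <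
          (v (g' j)).map (fun z : ℤ => (z : ℚ))) :
    ((((d : ℚ) + 1) / 2 < (dG : ℚ)) → ∀ m : ℤ, v (g dG) = (m : WithTop ℤ) →
        -(2 / (2 * (dG : ℚ) - (d : ℚ) + 1)) * (m : ℚ) < (e₂ : ℚ)) ∧
    (dG < d → ∀ m : ℤ, v (f d) = (m : WithTop ℤ) →
        -(2 / ((d : ℚ) - 1)) * (m : ℚ) < (e₂ : ℚ)) := by
  have hπK : algebraMap R K π ≠ 0 := by
    intro h
    rw [h, (hvtop 0).2 rfl] at hπ1
    exact (by simp : (⊤ : WithTop ℤ) ≠ 1) hπ1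
  have key : ∀ n : ℤ, v (algebraMap R K π ^ n) = (n : WithTop ℤ) :=
    aux_zpow v hvtop _ hπK hπ1
  have hdGd : dG ≤ d := by
    by_contra h
    exact hdG (hg dG (lt_of_not_ge h))
  constructor
  · intro h1 m hm
    have hsum : ∑ i ∈ Finset.Icc dG d, (Nat.choose i dG : K) * (g i * β ^ (i - dG)) = g dG := by
      rw [Finset.sum_eq_single dG]
      · simp
      · intro i hi hne
        rw [hdG' i (lt_of_le_of_ne (Finset.mem_Icc.1 hi).1 (Ne.symm hne))]; ring
      · intro h; exact absurd (Finset.mem_Icc.2 ⟨le_refl dG, hdGd⟩) h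
    have hv2 : v (g' dG) = (((((dG : ℤ) + 1) * e₂ + m : ℤ)) : WithTop ℤ) := by
      rw [hg' dG, hsum, v.map_mul, key, hm]
      norm_cast
    have hlt := (hineq dG hdGd).2
    rw [hv2, WithTop.map_coe] at hlt
    have hq : ((d : ℚ) + 1) / 2 * (e₂ : ℚ) < ((((dG : ℤ) + 1) * e₂ + m : ℤ) : ℚ) :=
      WithTop.coe_lt_coe.1 hlt
    push_cast at hq
    have hc : (0 : ℚ) < 2 * (dG : ℚ) - (d : ℚ) + 1 := by linarith
    have h2 : (-(2 * (m : ℚ))) / (2 * (dG : ℚ) - (d : ℚ) + 1) < (e₂ : ℚ) := by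
      rw [div_lt_iff₀ hc]
      nlinarith [hq]
    have heq : -(2 / (2 * (dG : ℚ) - (d : ℚ) + 1)) * (m : ℚ)
        = (-(2 * (m : ℚ))) / (2 * (dG : ℚ) - (d : ℚ) + 1) := by ring
    rw [heq]; exact h2
  · intro h1 m hm
    have hsum : ∑ i ∈ Finset.Icc d d, (Nat.choose i d : K) *
        (f i * β ^ (i - d) - g i * β ^ (i - d + 1)) = f d := by
      rw [Finset.Icc_self, Finset.sum_singleton, hdG' d h1]
      simp
    have hv2 : v (f' d) = ((((d : ℤ) * e₂ + m : ℤ)) : WithTop ℤ) := by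
      rw [hf' d, hsum, v.map_mul, key, hm]
      norm_cast
    have hlt := (hineq d le_rfl).1
    rw [hv2, WithTop.map_coe] at hlt
    have hq : ((d : ℚ) + 1) / 2 * (e₂ : ℚ) < (((d : ℤ) * e₂ + m : ℤ) : ℚ) :=
      WithTop.coe_lt_coe.1 hlt
    push_cast at hq
    have hc : (0 : ℚ) < (d : ℚ) - 1 := by
      have : (2 : ℚ) ≤ (d : ℚ) := by exact_mod_cast hd
      linarith
    have h2 : (-(2 * (m : ℚ))) / ((d : ℚ) - 1) < (e₂ : ℚ) := by
      rw [div_lt_iff₀ hc]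
      nlinarith [hq]
    have heq : -(2 / ((d : ℚ) - 1)) * (m : ℚ) = (-(2 * (m : ℚ))) / ((d : ℚ) - 1) := by ring
    rw [heq]; exact h2


end
end
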